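/- arXiv:2011.09433 — 8 statements merged into one kernel-verified Lean document; each statement's English description precedes it below -/
import Mathlib

section
/- For all real numbers λ and m and all complex numbers a and b, set z := (λ−m−a)(λ+m−b). Then |z| + Re z ≥ 2(λ−m−Re a)(λ+m−Re b) and |z| + Re z ≤ ½((Im a − Im b)² + (2λ − Re a − Re b)²). -/
/-- For real `λ, m` and complex `a, b`, with
`z := (λ−m−a)(λ+m−b)`, one has `|z| + Re z ≥ 2(λ−m−Re a)(λ+m−Re b)` and
`|z| + Re z ≤ ½((Im a − Im b)² + (2λ − Re a − Re b)²)`. -/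
theorem statement5 (lam m : ℝ) (a b : ℂ) :
    2 * ((lam - m - a.re) * (lam + m - b.re)) ≤
        ‖((lam : ℂ) - (m : ℂ) - a) * ((lam : ℂ) + (m : ℂ) - b)‖ +
          ((((lam : ℂ) - (m : ℂ) - a) * ((lam : ℂ) + (m : ℂ) - b))).re ∧
      ‖((lam : ℂ) - (m : ℂ) - a) * ((lam : ℂ) + (m : ℂ) - b)‖ +
          ((((lam : ℂ) - (m : ℂ) - a) * ((lam : ℂ) + (m : ℂ) - b))).re ≤
        (1 / 2) * ((a.im - b.im) ^ 2 + (2 * lam - a.re - b.re) ^ 2) := by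
  set u : ℂ := (lam : ℂ) - (m : ℂ) - a with hu
  set v : ℂ := (lam : ℂ) + (m : ℂ) - b with hv
  have hure : u.re = lam - m - a.re := by simp [hu]
  have huim : u.im = -a.im := by simp [hu]
  have hvre : v.re = lam + m - b.re := by simp [hv]
  have hvim : v.im = -b.im := by simp [hv]
  have hrez : (u * v).re = u.re * v.re - u.im * v.im := Complex.mul_re u v
  constructor
  · have h1 : (u * starRingEnd ℂ v).re ≤ ‖u * starRingEnd ℂ v‖ :=
      Complex.re_le_norm _
    have h2 : ‖u * starRingEnd ℂ v‖ = ‖u * v‖ := by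
      rw [norm_mul, norm_mul, Complex.norm_conj]
    have h3 : (u * starRingEnd ℂ v).re = u.re * v.re + u.im * v.im := by
      simp [Complex.mul_re]
    rw [h2, h3] at h1
    rw [hure, hvre, huim, hvim] at h1 hrez
    rw [hrez]
    nlinarith [h1]
  · have habs : ‖u * v‖ = ‖u‖ * ‖v‖ := norm_mul u v
    have h1 : ‖u‖ * ‖v‖ ≤
        ((‖u‖) ^ 2 + (‖v‖) ^ 2) / 2 := by
      nlinarith [sq_nonneg (‖u‖ - ‖v‖)]
    have h2 : (‖u‖) ^ 2 = u.re ^ 2 + u.im ^ 2 := by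
      rw [Complex.sq_norm, Complex.normSq_apply]; ring
    have h3 : (‖v‖) ^ 2 = v.re ^ 2 + v.im ^ 2 := by
      rw [Complex.sq_norm, Complex.normSq_apply]; ring
    rw [h2, h3, hure, hvre, huim, hvim] at h1
    rw [hure, hvre, huim, hvim] at hrez
    rw [habs, hrez]
    nlinarith [h1]
end

section
/- Let m ≥ 0 and let V : ℝ → ℂ^{2×2} have continuously differentiable entries V₁₁, V₁₂, V₂₁, V₂₂. Let V* : ℝ → ℂ^{2×2} be the pointwise adjoint (conjugate transpose), i.e. (V*)₁₁ = conj V₁₁, (V*)₁₂ = conj V₂₁, (V*)₂₁ = conj V₁₂, (V*)₂₂ = conj V₂₂. Then the two matrix identities [V*(x)−V(x), σ₁] = 0 and [V(x), V*(x)] − i σ₁ (V*−V)′(x) + m[σ₃, V*(x)−V(x)] = 0 hold for every x ∈ ℝ (equivalently, the formal commutator H_V H_{V*} − H_{V*} H_V vanishes as a differential expression) if and only if one of the following two sets of conditions holds on all of ℝ: (a) Im V₁₁ = Im V₂₂ is a constant function, Re V₁₂ = Re V₂₁, and Im V₁₂ + Im V₂₁ = 0; or (b) Im V₁₁ = Im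 V₂₂ is a constant function, Re V₁₂ = Re V₂₁, Im V₁₂ = Im V₂₁ is a nonzero constant function, and Re V₂₂ − Re V₁₁ − 2m = 0. -/
open Matrix

/-- The Pauli matrix `σ₁`. -/
noncomputable def sigma1 : Matrix (Fin 2) (Fin 2) ℂ := !![0, 1; 1, 0]

/-- The Pauli matrix `σ₃`. -/
noncomputable def sigma3 : Matrix (Fin 2) (Fin 2) ℂ := !![1, 0; 0, -1]

/-- The matrix potential `V(x)`. -/
noncomputable def Vmat (V11 V12 V21 V22 : ℝ → ℂ) (x : ℝ) : Matrix (Fin 2) (Fin 2) ℂ :=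
  !![V11 x, V12 x; V21 x, V22 x]

/-- The pointwise adjoint `V*(x)` (conjugate transpose). -/
noncomputable def VmatStar (V11 V12 V21 V22 : ℝ → ℂ) (x : ℝ) :
    Matrix (Fin 2) (Fin 2) ℂ :=
  !![starRingEnd ℂ (V11 x), starRingEnd ℂ (V21 x);
     starRingEnd ℂ (V12 x), starRingEnd ℂ (V22 x)]

/-- The entrywise derivative `(V* − V)′(x)`. -/
noncomputable def VstarVderiv (V11 V12 V21 V22 : ℝ → ℂ) (x : ℝ) :
    Matrix (Fin 2) (Fin 2) ℂ :=
  !![deriv (fun t => starRingEnd ℂ (V11 t) - V11 t) x,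
       deriv (fun t => starRingEnd ℂ (V21 t) - V12 t) x;
     deriv (fun t => starRingEnd ℂ (V12 t) - V21 t) x,
       deriv (fun t => starRingEnd ℂ (V22 t) - V22 t) x]

lemma deriv_conj_sub {f g : ℝ → ℂ} (hf : Differentiable ℝ f) (hg : Differentiable ℝ g)
    (x : ℝ) :
    deriv (fun t => starRingEnd ℂ (f t) - g t) x = starRingEnd ℂ (deriv f x) - deriv g x := by
  have := (((hf x).hasDerivAt.star).sub (hg x).hasDerivAt).deriv
  rw [starRingEnd_apply]; exact this

lemma hasDerivAt_re' {f : ℝ → ℂ} (hf : Differentiable ℝ f) (x : ℝ) :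
    HasDerivAt (fun t => (f t).re) (deriv f x).re x := by
  have := Complex.reCLM.hasFDerivAt.comp_hasDerivAt x (hf x).hasDerivAt
  simpa [Function.comp_def] using this

lemma hasDerivAt_im' {f : ℝ → ℂ} (hf : Differentiable ℝ f) (x : ℝ) :
    HasDerivAt (fun t => (f t).im) (deriv f x).im x := by
  have := Complex.imCLM.hasFDerivAt.comp_hasDerivAt x (hf x).hasDerivAt
  simpa [Function.comp_def] using this

lemma im_deriv_zero {f : ℝ → ℂ} (hf : Differentiable ℝ f) (c : ℝ)
    (hc : ∀ t, (f t).im = c) (x : ℝ) : (deriv f x).im = 0 := by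
  have h1 := hasDerivAt_im' hf x
  rw [show (fun t => (f t).im) = fun _ => c from funext hc] at h1
  exact h1.unique (hasDerivAt_const x c)

lemma re_deriv_eq {f g : ℝ → ℂ} (hf : Differentiable ℝ f) (hg : Differentiable ℝ g)
    (h : ∀ t, (f t).re = (g t).re) (x : ℝ) : (deriv f x).re = (deriv g x).re := by
  have h1 := hasDerivAt_re' hf x
  rw [show (fun t => (f t).re) = fun t => (g t).re from funext h] at h1
  exact h1.unique (hasDerivAt_re' hg x)

lemma eq1_iff (V11 V12 V21 V22 : ℝ → ℂ) (x : ℝ) :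
    ((VmatStar V11 V12 V21 V22 x - Vmat V11 V12 V21 V22 x) * sigma1 -
        sigma1 * (VmatStar V11 V12 V21 V22 x - Vmat V11 V12 V21 V22 x) = 0)
    ↔ ((V11 x).im = (V22 x).im ∧ (V12 x).re = (V21 x).re) := by
  rw [← Matrix.ext_iff]
  simp only [Vmat, VmatStar, sigma1, Fin.forall_fin_two]
  simp [Matrix.mul_apply, Fin.sum_univ_two, Complex.ext_iff]
  constructor
  · rintro ⟨⟨h1, h2⟩, h3, h4⟩
    constructor <;> linarith
  · rintro ⟨h1, h2⟩
    refine ⟨⟨?_, ?_⟩, ?_, ?_⟩ <;> (try constructor) <;> linarith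

lemma key (m : ℝ) (V11 V12 V21 V22 : ℝ → ℂ)
    (hd11 : Differentiable ℝ V11) (hd12 : Differentiable ℝ V12)
    (hd21 : Differentiable ℝ V21) (hd22 : Differentiable ℝ V22) (x : ℝ)
    (F1 : (V11 x).im = (V22 x).im) (F2 : (V12 x).re = (V21 x).re)
    (F3 : (deriv V11 x).im = 0) (F4 : (deriv V22 x).im = 0)
    (F5 : (deriv V12 x).re = (deriv V21 x).re)
    (F6 : (deriv V12 x).im + (deriv V21 x).im = 0)
    (F7 : ((V12 x).im + (V21 x).im) * ((V22 x).re - (V11 x).re - 2 * m) = 0)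
    (F8 : (V12 x).im ^ 2 = (V21 x).im ^ 2) :
    Vmat V11 V12 V21 V22 x * VmatStar V11 V12 V21 V22 x -
        VmatStar V11 V12 V21 V22 x * Vmat V11 V12 V21 V22 x -
        Complex.I • (sigma1 * VstarVderiv V11 V12 V21 V22 x) +
        (m : ℂ) • (sigma3 * (VmatStar V11 V12 V21 V22 x - Vmat V11 V12 V21 V22 x) -
          (VmatStar V11 V12 V21 V22 x - Vmat V11 V12 V21 V22 x) * sigma3) = 0 := by
  rw [← Matrix.ext_iff]
  simp only [Fin.forall_fin_two]
  simp only [Vmat, VmatStar, VstarVderiv, sigma1, sigma3, Matrix.mul_apply, Fin.sum_univ_two,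
    deriv_conj_sub hd11 hd11, deriv_conj_sub hd21 hd12, deriv_conj_sub hd12 hd21,
    deriv_conj_sub hd22 hd22]
  simp [Complex.ext_iff]
  refine ⟨⟨⟨?_, ?_⟩, ?_, ?_⟩, ⟨?_, ?_⟩, ?_, ?_⟩
  · linear_combination ((V12 x).re + (V21 x).re) * F2 + F8 - F6
  · linear_combination -F5
  · linear_combination (-((V11 x).re - (V22 x).re + 2 * m)) * F2 +
      ((V21 x).im - (V12 x).im) * F1 - 2 * F4
  · linear_combination F7 + ((V12 x).re + (V21 x).re) * F1
  · linear_combination (-((V11 x).re - (V22 x).re + 2 * m)) * F2 +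
      ((V21 x).im - (V12 x).im) * F1 - 2 * F3
  · linear_combination -F7 - ((V12 x).re + (V21 x).re) * F1
  · linear_combination (-((V12 x).re + (V21 x).re)) * F2 - F8 - F6
  · linear_combination F5

/-- Criterion for the (formal) normality of the Dirac operator `H_V`:
the identities `[V*−V, σ₁] = 0` and `[V,V*] − iσ₁(V*−V)′ + m[σ₃, V*−V] = 0` hold
everywhere iff the potential satisfies one of the two sets of conditions (a), (b). -/
theorem statement6 (m : ℝ) (hm : 0 ≤ m) (V11 V12 V21 V22 : ℝ → ℂ)
    (h11 : ContDiff ℝ 1 V11) (h12 : ContDiff ℝ 1 V12)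
    (h21 : ContDiff ℝ 1 V21) (h22 : ContDiff ℝ 1 V22) :
    (∀ x : ℝ,
      (VmatStar V11 V12 V21 V22 x - Vmat V11 V12 V21 V22 x) * sigma1 -
          sigma1 * (VmatStar V11 V12 V21 V22 x - Vmat V11 V12 V21 V22 x) = 0 ∧
      Vmat V11 V12 V21 V22 x * VmatStar V11 V12 V21 V22 x -
          VmatStar V11 V12 V21 V22 x * Vmat V11 V12 V21 V22 x -
          Complex.I • (sigma1 * VstarVderiv V11 V12 V21 V22 x) +
          (m : ℂ) • (sigma3 * (VmatStar V11 V12 V21 V22 x - Vmat V11 V12 V21 V22 x) -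
            (VmatStar V11 V12 V21 V22 x - Vmat V11 V12 V21 V22 x) * sigma3) = 0) ↔
    (((∃ cst : ℝ, ∀ x : ℝ, (V11 x).im = cst ∧ (V22 x).im = cst) ∧
        (∀ x : ℝ, (V12 x).re = (V21 x).re) ∧
        (∀ x : ℝ, (V12 x).im + (V21 x).im = 0)) ∨
      ((∃ cst : ℝ, ∀ x : ℝ, (V11 x).im = cst ∧ (V22 x).im = cst) ∧
        (∀ x : ℝ, (V12 x).re = (V21 x).re) ∧
        (∃ k : ℝ, k ≠ 0 ∧ ∀ x : ℝ, (V12 x).im = k ∧ (V21 x).im = k) ∧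
        (∀ x : ℝ, (V22 x).re - (V11 x).re - 2 * m = 0))) := by
  have hd11 : Differentiable ℝ V11 := h11.differentiable one_ne_zero
  have hd12 : Differentiable ℝ V12 := h12.differentiable one_ne_zero
  have hd21 : Differentiable ℝ V21 := h21.differentiable one_ne_zero
  have hd22 : Differentiable ℝ V22 := h22.differentiable one_ne_zero
  constructor
  · intro H
    have hIm : ∀ x, (V11 x).im = (V22 x).im :=
      fun x => ((eq1_iff V11 V12 V21 V22 x).mp (H x).1).1
    have hRe : ∀ x, (V12 x).re = (V21 x).re :=
      fun x => ((eq1_iff V11 V12 V21 V22 x).mp (H x).1).2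
    -- extract scalar consequences of the second equation at each point
    have hFacts : ∀ x, (deriv V11 x).im = 0 ∧ (deriv V22 x).im = 0 ∧
        ((deriv V12 x).im + (deriv V21 x).im = 0) ∧
        ((V12 x).im ^ 2 = (V21 x).im ^ 2) ∧
        (((V12 x).im + (V21 x).im) * ((V22 x).re - (V11 x).re - 2 * m) = 0) := by
      intro x
      have h2 := (H x).2
      rw [← Matrix.ext_iff] at h2
      simp only [Fin.forall_fin_two] at h2
      simp only [Vmat, VmatStar, VstarVderiv, sigma1, sigma3, Matrix.mul_apply,
        Fin.sum_univ_two, deriv_conj_sub hd11 hd11, deriv_conj_sub hd21 hd12,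
        deriv_conj_sub hd12 hd21, deriv_conj_sub hd22 hd22] at h2
      simp [Complex.ext_iff] at h2
      obtain ⟨⟨⟨e11re, e11im⟩, e12re, e12im⟩, ⟨e21re, e21im⟩, e22re, e22im⟩ := h2
      have hF2 := hRe x
      have hF1 := hIm x
      refine ⟨?_, ?_, ?_, ?_, ?_⟩
      · linear_combination (-(1:ℝ)/2) * e21re -
          (((V11 x).re - (V22 x).re + 2 * m)/2) * hF2 +
          (((V21 x).im - (V12 x).im)/2) * hF1
      · linear_combination (-(1:ℝ)/2) * e12re -
          (((V11 x).re - (V22 x).re + 2 * m)/2) * hF2 +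
          (((V21 x).im - (V12 x).im)/2) * hF1
      · linear_combination (-(1:ℝ)/2) * e11re - ((1:ℝ)/2) * e22re
      · linear_combination ((1:ℝ)/2) * e11re - ((1:ℝ)/2) * e22re -
          ((V12 x).re + (V21 x).re) * hF2
      · linear_combination e12im - ((V12 x).re + (V21 x).re) * hF1
    -- Im V11 is constant
    have hcst : ∀ x, (V11 x).im = (V11 0).im := by
      have : ∀ y, deriv (fun t => (V11 t).im) y = 0 := fun y => by
        rw [(hasDerivAt_im' hd11 y).deriv]; exact (hFacts y).1
      exact fun x => is_const_of_deriv_eq_zero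
        (fun t => (hasDerivAt_im' hd11 t).differentiableAt) this x 0
    have hcstpair : ∃ cst : ℝ, ∀ x : ℝ, (V11 x).im = cst ∧ (V22 x).im = cst :=
      ⟨(V11 0).im, fun x => ⟨hcst x, by rw [← hIm x]; exact hcst x⟩⟩
    -- the sum Im V12 + Im V21 is constant
    have hscst : ∀ x, (V12 x).im + (V21 x).im = (V12 0).im + (V21 0).im := by
      have hds : ∀ y, HasDerivAt (fun t => (V12 t).im + (V21 t).im)
          ((deriv V12 y).im + (deriv V21 y).im) y :=
        fun y => (hasDerivAt_im' hd12 y).add (hasDerivAt_im' hd21 y)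
      have : ∀ y, deriv (fun t => (V12 t).im + (V21 t).im) y = 0 := fun y => by
        rw [(hds y).deriv]; exact (hFacts y).2.2.1
      exact fun x => is_const_of_deriv_eq_zero
        (fun t => (hds t).differentiableAt) this x 0
    by_cases hk : (V12 0).im + (V21 0).im = 0
    · left
      exact ⟨hcstpair, hRe, fun x => by rw [hscst x, hk]⟩
    · right
      refine ⟨hcstpair, hRe, ⟨((V12 0).im + (V21 0).im) / 2, by
          intro h; exact hk (by linarith [div_eq_zero_iff.mp h]), ?_⟩, ?_⟩
      · intro x
        have hsx : (V12 x).im + (V21 x).im = (V12 0).im + (V21 0).im := hscst x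
        have hsq := (hFacts x).2.2.2.1
        have hdiff : (V12 x).im - (V21 x).im = 0 := by
          have hmul : ((V12 x).im - (V21 x).im) * ((V12 x).im + (V21 x).im) = 0 := by
            linear_combination hsq
          rcases mul_eq_zero.mp hmul with h | h
          · exact h
          · exact absurd (by rw [← hsx]; exact h) hk
        constructor <;> · field_simp; linarith
      · intro x
        have hprod := (hFacts x).2.2.2.2
        rcases mul_eq_zero.mp hprod with h | h
        · exact absurd (by rw [← hscst x]; exact h) hk
        · exact h
  · intro h x
    rcases h with ⟨⟨cst, hc⟩, hRe, hs0⟩ | ⟨⟨cst, hc⟩, hRe, ⟨k, hk0, hk⟩, hd⟩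
    · refine ⟨(eq1_iff V11 V12 V21 V22 x).mpr ⟨by rw [(hc x).1, (hc x).2], hRe x⟩, ?_⟩
      refine key m V11 V12 V21 V22 hd11 hd12 hd21 hd22 x
        (by rw [(hc x).1, (hc x).2]) (hRe x)
        (im_deriv_zero hd11 cst (fun t => (hc t).1) x)
        (im_deriv_zero hd22 cst (fun t => (hc t).2) x)
        (re_deriv_eq hd12 hd21 hRe x) ?_ (by rw [hs0 x, zero_mul]) ?_
      · -- Im V12 = - Im V21 as functions
        have h1 := hasDerivAt_im' hd12 x
        rw [show (fun t => (V12 t).im) = fun t => -((V21 t).im) from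
          funext fun t => by linarith [hs0 t]] at h1
        have h2 := (hasDerivAt_im' hd21 x).neg
        have := h1.unique h2
        linarith [this]
      · linear_combination ((V12 x).im - (V21 x).im) * hs0 x
    · refine ⟨(eq1_iff V11 V12 V21 V22 x).mpr ⟨by rw [(hc x).1, (hc x).2], hRe x⟩, ?_⟩
      refine key m V11 V12 V21 V22 hd11 hd12 hd21 hd22 x
        (by rw [(hc x).1, (hc x).2]) (hRe x)
        (im_deriv_zero hd11 cst (fun t => (hc t).1) x)
        (im_deriv_zero hd22 cst (fun t => (hc t).2) x)
        (re_deriv_eq hd12 hd21 hRe x) ?_ (by rw [hd x, mul_zero]) ?_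
      · rw [im_deriv_zero hd12 k (fun t => (hk t).1) x,
          im_deriv_zero hd21 k (fun t => (hk t).2) x, add_zero]
      · rw [(hk x).1, (hk x).2]
end

section
/- Let ν ≥ −1 and M > 0, and let 𝒱 : (0,∞) → ℝ be twice differentiable with 𝒱′(t) > 0 and |𝒱″(t)| ≤ M t^ν 𝒱′(t) for all t > 0. Then there exists a constant C ≥ 1, depending only on M and ν, such that for every x > 0 with x^{1+ν} ≥ 1 and every real h with |h| ≤ x^{−ν}/2, one has C⁻¹ 𝒱′(x) ≤ 𝒱′(x+h) ≤ C 𝒱′(x). -/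
/-- Let `ν ≥ −1` and `M > 0`. There is a constant `C ≥ 1`, depending only
on `M` and `ν`, such that for every `𝒱 : (0,∞) → ℝ`, twice differentiable with `𝒱′ > 0` and
`|𝒱″(t)| ≤ M t^ν 𝒱′(t)` on `(0,∞)`, every `x > 0` with `x^{1+ν} ≥ 1` and every real `h`
with `|h| ≤ x^{−ν}/2`, one has `C⁻¹ 𝒱′(x) ≤ 𝒱′(x+h) ≤ C 𝒱′(x)`. -/
theorem statement7 (ν M : ℝ) (hν : -1 ≤ ν) (hM : 0 < M) :
    ∃ C : ℝ, 1 ≤ C ∧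
      ∀ V : ℝ → ℝ,
        (∀ t : ℝ, 0 < t → DifferentiableAt ℝ V t) →
        (∀ t : ℝ, 0 < t → DifferentiableAt ℝ (deriv V) t) →
        (∀ t : ℝ, 0 < t → 0 < deriv V t) →
        (∀ t : ℝ, 0 < t → |deriv (deriv V) t| ≤ M * t ^ ν * deriv V t) →
        ∀ x : ℝ, 0 < x → 1 ≤ x ^ (1 + ν) →
          ∀ h : ℝ, |h| ≤ x ^ (-ν) / 2 →
            C⁻¹ * deriv V x ≤ deriv V (x + h) ∧ deriv V (x + h) ≤ C * deriv V x := by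
  set K : ℝ := (3/2 : ℝ) ^ ν + (2 : ℝ) ^ (-ν) with hKdef
  have hK0 : 0 < K := by positivity
  refine ⟨Real.exp (M * K / 2), Real.one_le_exp (by positivity), ?_⟩
  intro V hV1 hV2 hVpos hVbound x hx hx1 h hh
  -- x^{-ν} ≤ x
  have hxnu : x ^ (-ν) ≤ x := by
    have h1 : x ^ (-ν) * x ^ (1 + ν) = x := by
      rw [← Real.rpow_add hx]; norm_num
    calc x ^ (-ν) = x ^ (-ν) * 1 := by ring
    _ ≤ x ^ (-ν) * x ^ (1 + ν) := by
        exact mul_le_mul_of_nonneg_left hx1 (Real.rpow_nonneg hx.le _)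
    _ = x := h1
  have hhx : |h| ≤ x / 2 := hh.trans (by linarith)
  have hxh : x + h ∈ Set.Icc (x/2) (x + x/2) := by
    have := abs_le.mp hhx
    constructor <;> linarith [this.1, this.2]
  have hxmem : x ∈ Set.Icc (x/2) (x + x/2) := by constructor <;> linarith
  have hpos : ∀ t ∈ Set.Icc (x/2) (x + x/2), 0 < t := fun t ht => lt_of_lt_of_le (by linarith) ht.1
  set g : ℝ → ℝ := fun t => Real.log (deriv V t) with hgdef
  have hderiv : ∀ t ∈ Set.Icc (x/2) (x + x/2),
      HasDerivWithinAt g (deriv (deriv V) t / deriv V t) (Set.Icc (x/2) (x + x/2)) t := by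
    intro t ht
    exact (((hV2 t (hpos t ht)).hasDerivAt).log (ne_of_gt (hVpos t (hpos t ht)))).hasDerivWithinAt
  have hbound : ∀ t ∈ Set.Icc (x/2) (x + x/2),
      ‖deriv (deriv V) t / deriv V t‖ ≤ M * K * x ^ ν := by
    intro t ht
    have htpos := hpos t ht
    have hVt := hVpos t htpos
    have htnu : t ^ ν ≤ K * x ^ ν := by
      rcases le_or_gt 0 ν with hν0 | hν0
      · calc t ^ ν ≤ (x + x/2) ^ ν := Real.rpow_le_rpow htpos.le ht.2 hν0
        _ = (3/2 * x) ^ ν := by ring_nf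
        _ = (3/2 : ℝ) ^ ν * x ^ ν := Real.mul_rpow (by norm_num) hx.le
        _ ≤ K * x ^ ν := by
            apply mul_le_mul_of_nonneg_right _ (Real.rpow_nonneg hx.le _)
            rw [hKdef]
            have : (0:ℝ) < (2:ℝ) ^ (-ν) := by positivity
            linarith
      · calc t ^ ν ≤ (x/2) ^ ν := Real.rpow_le_rpow_of_nonpos (by linarith) ht.1 hν0.le
        _ = x ^ ν / (2:ℝ) ^ ν := Real.div_rpow hx.le (by norm_num : (0:ℝ) ≤ 2) ν
        _ = (2:ℝ) ^ (-ν) * x ^ ν := by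
            rw [Real.rpow_neg (by norm_num)]; ring
        _ ≤ K * x ^ ν := by
            apply mul_le_mul_of_nonneg_right _ (Real.rpow_nonneg hx.le _)
            rw [hKdef]
            have : (0:ℝ) < (3/2:ℝ) ^ ν := by positivity
            linarith
    rw [Real.norm_eq_abs, abs_div, abs_of_pos hVt, div_le_iff₀ hVt]
    calc |deriv (deriv V) t| ≤ M * t ^ ν * deriv V t := hVbound t htpos
    _ ≤ M * (K * x ^ ν) * deriv V t := by
        apply mul_le_mul_of_nonneg_right _ hVt.le
        exact mul_le_mul_of_nonneg_left htnu hM.le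
    _ = M * K * x ^ ν * deriv V t := by ring
  have hconv : Convex ℝ (Set.Icc (x/2) (x + x/2)) := convex_Icc _ _
  have key : ‖g (x + h) - g x‖ ≤ (M * K * x ^ ν) * ‖(x + h) - x‖ :=
    hconv.norm_image_sub_le_of_norm_hasDerivWithin_le hderiv hbound hxmem hxh
  have habs : |g (x + h) - g x| ≤ M * K / 2 := by
    rw [Real.norm_eq_abs] at key
    have h2 : ‖(x + h) - x‖ = |h| := by rw [Real.norm_eq_abs]; ring_nf
    rw [h2] at key
    have h3 : (M * K * x ^ ν) * |h| ≤ (M * K * x ^ ν) * (x ^ (-ν) / 2) :=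
      mul_le_mul_of_nonneg_left hh (by positivity)
    have h4 : x ^ ν * x ^ (-ν) = 1 := by
      rw [← Real.rpow_add hx]; norm_num
    calc |g (x + h) - g x| ≤ (M * K * x ^ ν) * (x ^ (-ν) / 2) := key.trans h3
    _ = M * K * (x ^ ν * x ^ (-ν)) / 2 := by ring
    _ = M * K / 2 := by rw [h4]; ring
  have hexp1 : deriv V (x + h) = Real.exp (g (x + h)) :=
    (Real.exp_log (hVpos _ (hpos _ hxh))).symm
  have hexp2 : deriv V x = Real.exp (g x) := (Real.exp_log (hVpos x hx)).symm
  have habs' := abs_le.mp habs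
  constructor
  · rw [hexp1, hexp2, ← Real.exp_neg, ← Real.exp_add]
    exact Real.exp_le_exp.mpr (by linarith [habs'.2])
  · rw [hexp1, hexp2, ← Real.exp_add]
    exact Real.exp_le_exp.mpr (by linarith [habs'.1])
end

section
/- Let ν ≥ −1 and M > 0, and let 𝒱 : (0,∞) → ℝ be twice differentiable with 𝒱′(t) > 0 and |𝒱″(t)| ≤ M t^ν 𝒱′(t) for all t > 0. Then there exist constants c > 0 and C > 0, depending only on M and ν, such that for every x_β > 0 with x_β^{1+ν} ≥ 1 and every x > 0 with |x − x_β| ≤ x_β^{−ν}/2, one has c 𝒱′(x_β)(x−x_β)² ≤ ∫_{x_β}^{x} (𝒱(t)−𝒱(x_β)) dt ≤ C 𝒱′(x_β)(x−x_β)². -/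
/-- Let `ν ≥ −1` and `M > 0`. There are constants `c, C > 0`, depending
only on `M` and `ν`, such that for every `𝒱 : (0,∞) → ℝ`, twice differentiable with
`𝒱′ > 0` and `|𝒱″(t)| ≤ M t^ν 𝒱′(t)` on `(0,∞)`, every `x_β > 0` with `x_β^{1+ν} ≥ 1`
and every `x > 0` with `|x − x_β| ≤ x_β^{−ν}/2`, one has
`c 𝒱′(x_β)(x−x_β)² ≤ ∫_{x_β}^{x} (𝒱(t)−𝒱(x_β)) dt ≤ C 𝒱′(x_β)(x−x_β)²`. -/
theorem statement8 (ν M : ℝ) (hν : -1 ≤ ν) (hM : 0 < M) :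
    ∃ c : ℝ, 0 < c ∧ ∃ C : ℝ, 0 < C ∧
      ∀ V : ℝ → ℝ,
        (∀ t : ℝ, 0 < t → DifferentiableAt ℝ V t) →
        (∀ t : ℝ, 0 < t → DifferentiableAt ℝ (deriv V) t) →
        (∀ t : ℝ, 0 < t → 0 < deriv V t) →
        (∀ t : ℝ, 0 < t → |deriv (deriv V) t| ≤ M * t ^ ν * deriv V t) →
        ∀ xb : ℝ, 0 < xb → 1 ≤ xb ^ (1 + ν) →
          ∀ x : ℝ, 0 < x → |x - xb| ≤ xb ^ (-ν) / 2 →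
            c * deriv V xb * (x - xb) ^ 2 ≤ (∫ t in xb..x, (V t - V xb)) ∧
              (∫ t in xb..x, (V t - V xb)) ≤ C * deriv V xb * (x - xb) ^ 2 := by
  set K : ℝ := max ((2:ℝ) ^ (-ν)) (((3:ℝ)/2) ^ ν) with hKdef
  have hK0 : 0 < K := lt_max_of_lt_left (Real.rpow_pos_of_pos two_pos _)
  set A : ℝ := M * K / 2 with hAdef
  have hA0 : 0 < A := by positivity
  refine ⟨Real.exp (-A) / 2, by positivity, Real.exp A / 2, by positivity, ?_⟩
  intro V hV1 hV2 hV3 hV4 xb hxb hxb1 x hx hxx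
  -- xb ^ (-ν) ≤ xb
  have hxbν : xb ^ (-ν) ≤ xb := by
    have h1 : xb ^ (-ν) * xb ^ (1 + ν) = xb := by
      rw [← Real.rpow_add hxb]
      norm_num
    calc xb ^ (-ν) = xb ^ (-ν) * 1 := by ring
      _ ≤ xb ^ (-ν) * xb ^ (1 + ν) :=
          mul_le_mul_of_nonneg_left hxb1 (Real.rpow_nonneg hxb.le _)
      _ = xb := h1
  have habs : |x - xb| ≤ xb / 2 := hxx.trans (by linarith)
  have habs' := abs_le.mp habs
  set S : Set ℝ := Set.Icc (xb / 2) (3 * xb / 2) with hSdef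
  have hxbS : xb ∈ S := ⟨by linarith, by linarith⟩
  have hxS : x ∈ S := ⟨by linarith [habs'.1], by linarith [habs'.2]⟩
  have hsub : Set.uIcc xb x ⊆ S := Set.uIcc_subset_Icc hxbS hxS
  have hSpos : ∀ t ∈ S, (0:ℝ) < t := fun t ht => lt_of_lt_of_le (by linarith) ht.1
  -- t ^ ν ≤ K * xb ^ ν on S
  have htν : ∀ t ∈ S, t ^ ν ≤ K * xb ^ ν := by
    intro t ht
    rcases le_or_gt 0 ν with h | h
    · calc t ^ ν ≤ (3 * xb / 2) ^ ν := Real.rpow_le_rpow (hSpos t ht).le ht.2 h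
        _ = ((3:ℝ)/2) ^ ν * xb ^ ν := by
            rw [show 3 * xb / 2 = (3/2) * xb by ring, Real.mul_rpow (by norm_num) hxb.le]
        _ ≤ K * xb ^ ν :=
            mul_le_mul_of_nonneg_right (le_max_right _ _) (Real.rpow_nonneg hxb.le _)
    · calc t ^ ν ≤ (xb / 2) ^ ν :=
            Real.rpow_le_rpow_of_nonpos (by linarith) ht.1 h.le
        _ = (2:ℝ) ^ (-ν) * xb ^ ν := by
            rw [show xb / 2 = (2:ℝ)⁻¹ * xb by ring, Real.mul_rpow (by norm_num) hxb.le,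
              Real.inv_rpow (by norm_num), ← Real.rpow_neg (by norm_num)]
        _ ≤ K * xb ^ ν :=
            mul_le_mul_of_nonneg_right (le_max_left _ _) (Real.rpow_nonneg hxb.le _)
  set B : ℝ := M * K * xb ^ ν with hBdef
  -- MVT bound on log ∘ deriv V
  have hg : ∀ t ∈ S, HasDerivWithinAt (fun s => Real.log (deriv V s))
      (deriv (deriv V) t / deriv V t) S t := by
    intro t ht
    exact (((hV2 t (hSpos t ht)).hasDerivAt).log (ne_of_gt (hV3 t (hSpos t ht)))).hasDerivWithinAt
  have hbound : ∀ t ∈ S, ‖deriv (deriv V) t / deriv V t‖ ≤ B := by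
    intro t ht
    have hpt := hV3 t (hSpos t ht)
    rw [Real.norm_eq_abs, abs_div, abs_of_pos hpt, div_le_iff₀ hpt]
    calc |deriv (deriv V) t| ≤ M * t ^ ν * deriv V t := hV4 t (hSpos t ht)
      _ ≤ M * (K * xb ^ ν) * deriv V t :=
          mul_le_mul_of_nonneg_right (mul_le_mul_of_nonneg_left (htν t ht) hM.le) hpt.le
      _ = B * deriv V t := by rw [hBdef]; ring
  -- log comparability on uIcc xb x
  have hlog : ∀ t ∈ Set.uIcc xb x, |Real.log (deriv V t) - Real.log (deriv V xb)| ≤ A := by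
    intro t ht
    have h1 := (convex_Icc (xb/2) (3*xb/2)).norm_image_sub_le_of_norm_hasDerivWithin_le hg hbound hxbS (hsub ht)
    rw [Real.norm_eq_abs, Real.norm_eq_abs] at h1
    have htx : |t - xb| ≤ |x - xb| := by
      rcases le_total xb x with h | h
      · rw [Set.uIcc_of_le h] at ht
        rw [abs_of_nonneg (by linarith [ht.1]), abs_of_nonneg (by linarith)]
        linarith [ht.2]
      · rw [Set.uIcc_of_ge h] at ht
        rw [abs_of_nonpos (by linarith [ht.2]), abs_of_nonpos (by linarith)]
        linarith [ht.1]
    have hB0 : 0 ≤ B := by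
      have := Real.rpow_nonneg hxb.le ν
      positivity
    have hone : xb ^ ν * xb ^ (-ν) = 1 := by
      rw [← Real.rpow_add hxb]
      norm_num
    calc |Real.log (deriv V t) - Real.log (deriv V xb)| ≤ B * |t - xb| := h1
      _ ≤ B * (xb ^ (-ν) / 2) := mul_le_mul_of_nonneg_left (htx.trans hxx) hB0
      _ = M * K * (xb ^ ν * xb ^ (-ν)) / 2 := by rw [hBdef]; ring
      _ = A := by rw [hone, hAdef]; ring
  set L : ℝ := Real.exp (-A) * deriv V xb with hLdef
  set U : ℝ := Real.exp A * deriv V xb with hUdef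
  have hpxb := hV3 xb hxb
  -- derivative comparability
  have hLU : ∀ t ∈ Set.uIcc xb x, L ≤ deriv V t ∧ deriv V t ≤ U := by
    intro t ht
    have hpt := hV3 t (hSpos t (hsub ht))
    have h := abs_le.mp (hlog t ht)
    constructor
    · calc L = Real.exp (-A + Real.log (deriv V xb)) := by
            rw [Real.exp_add, Real.exp_log hpxb]
        _ ≤ Real.exp (Real.log (deriv V t)) := Real.exp_le_exp.mpr (by linarith [h.1])
        _ = deriv V t := Real.exp_log hpt
    · calc deriv V t = Real.exp (Real.log (deriv V t)) := (Real.exp_log hpt).symm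
        _ ≤ Real.exp (A + Real.log (deriv V xb)) := Real.exp_le_exp.mpr (by linarith [h.2])
        _ = U := by rw [Real.exp_add, Real.exp_log hpxb]
  -- continuity
  have hVcont : ContinuousOn V S := fun s hs => (hV1 s (hSpos s hs)).continuousAt.continuousWithinAt
  have hV'cont : ContinuousOn (deriv V) S :=
    fun s hs => (hV2 s (hSpos s hs)).continuousAt.continuousWithinAt
  -- FTC
  have hVeq : ∀ t ∈ Set.uIcc xb x, V t - V xb = ∫ s in xb..t, deriv V s := by
    intro t ht
    have hsub' : Set.uIcc xb t ⊆ Set.uIcc xb x :=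
      Set.uIcc_subset_uIcc Set.left_mem_uIcc ht
    exact (intervalIntegral.integral_deriv_eq_sub
      (fun s hs => hV1 s (hSpos s (hsub (hsub' hs))))
      ((hV'cont.mono (hsub'.trans hsub)).intervalIntegrable)).symm
  have hid : ∀ a b : ℝ, (∫ t in a..b, (t - xb)) = ((b - xb)^2 - (a - xb)^2)/2 := by
    intro a b
    rw [intervalIntegral.integral_comp_sub_right (fun t => t) xb, integral_id]
  have hconst : ∀ (c' a b : ℝ), (∫ _ in a..b, c') = (b - a) * c' := fun c' a b => by
    rw [intervalIntegral.integral_const, smul_eq_mul]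
  -- pointwise bounds on V t - V xb
  have hlo : ∀ t ∈ Set.uIcc xb x, xb ≤ t →
      L * (t - xb) ≤ V t - V xb ∧ V t - V xb ≤ U * (t - xb) := by
    intro t ht hxt
    rw [hVeq t ht]
    have hsub' : Set.Icc xb t ⊆ Set.uIcc xb x :=
      (Set.Icc_subset_uIcc).trans (Set.uIcc_subset_uIcc Set.left_mem_uIcc ht)
    have hint : IntervalIntegrable (deriv V) MeasureTheory.volume xb t :=
      (hV'cont.mono (fun s hs => hsub (hsub' ((Set.uIcc_of_le hxt ▸ hs))))).intervalIntegrable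
    constructor
    · have h1 := intervalIntegral.integral_mono_on hxt
        (intervalIntegrable_const (c := L)) hint (fun s hs => (hLU s (hsub' hs)).1)
      calc L * (t - xb) = ∫ _ in xb..t, L := by rw [hconst]; ring
        _ ≤ _ := h1
    · have h2 := intervalIntegral.integral_mono_on hxt hint
        (intervalIntegrable_const (c := U)) (fun s hs => (hLU s (hsub' hs)).2)
      calc (∫ s in xb..t, deriv V s) ≤ ∫ _ in xb..t, U := h2
        _ = U * (t - xb) := by rw [hconst]; ring
  have hhi : ∀ t ∈ Set.uIcc xb x, t ≤ xb →
      U * (t - xb) ≤ V t - V xb ∧ V t - V xb ≤ L * (t - xb) := by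
    intro t ht hxt
    have hsub' : Set.Icc t xb ⊆ Set.uIcc xb x :=
      (Set.Icc_subset_uIcc').trans (Set.uIcc_subset_uIcc Set.left_mem_uIcc ht)
    have hint : IntervalIntegrable (deriv V) MeasureTheory.volume t xb :=
      (hV'cont.mono (fun s hs => hsub (hsub' ((Set.uIcc_of_le hxt ▸ hs))))).intervalIntegrable
    have h1 : L * (xb - t) ≤ ∫ s in t..xb, deriv V s := by
      have h1' := intervalIntegral.integral_mono_on hxt
        (intervalIntegrable_const (c := L)) hint (fun s hs => (hLU s (hsub' hs)).1)
      calc L * (xb - t) = ∫ _ in t..xb, L := by rw [hconst]; ring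
        _ ≤ _ := h1'
    have h2 : (∫ s in t..xb, deriv V s) ≤ U * (xb - t) := by
      have h2' := intervalIntegral.integral_mono_on hxt hint
        (intervalIntegrable_const (c := U)) (fun s hs => (hLU s (hsub' hs)).2)
      calc (∫ s in t..xb, deriv V s) ≤ ∫ _ in t..xb, U := h2'
        _ = U * (xb - t) := by rw [hconst]; ring
    have h3 : V t - V xb = -(∫ s in t..xb, deriv V s) := by
      rw [hVeq t ht, intervalIntegral.integral_symm]
    constructor <;> [linarith; linarith]
  -- integrability of the integrand
  have hintg : ∀ a b : ℝ, a ∈ S → b ∈ S → Set.uIcc a b ⊆ S →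
      IntervalIntegrable (fun t => V t - V xb) MeasureTheory.volume a b := by
    intro a b _ _ hab
    exact ((hVcont.mono hab).sub continuousOn_const).intervalIntegrable
  have hcVxb : Real.exp (-A) / 2 * deriv V xb * (x - xb) ^ 2 = L * (x - xb)^2 / 2 := by
    rw [hLdef]; ring
  have hCVxb : Real.exp A / 2 * deriv V xb * (x - xb) ^ 2 = U * (x - xb)^2 / 2 := by
    rw [hUdef]; ring
  rw [hcVxb, hCVxb]
  rcases le_total xb x with h | h
  · have hintf := hintg xb x hxbS hxS hsub
    have hlin : ∀ (c' : ℝ), IntervalIntegrable (fun t => c' * (t - xb))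
        MeasureTheory.volume xb x :=
      fun c' => (Continuous.intervalIntegrable (continuous_const.mul (continuous_id.sub continuous_const)) _ _)
    constructor
    · have := intervalIntegral.integral_mono_on h (hlin L) hintf
        (fun t ht => (hlo t (Set.Icc_subset_uIcc ht) ht.1).1)
      rw [intervalIntegral.integral_const_mul, hid xb x] at this
      calc L * (x - xb)^2 / 2 = L * (((x - xb)^2 - (xb - xb)^2)/2) := by ring
        _ ≤ _ := this
    · have := intervalIntegral.integral_mono_on h hintf (hlin U)
        (fun t ht => (hlo t (Set.Icc_subset_uIcc ht) ht.1).2)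
      rw [intervalIntegral.integral_const_mul, hid xb x] at this
      calc (∫ t in xb..x, (V t - V xb)) ≤ U * (((x - xb)^2 - (xb - xb)^2)/2) := this
        _ = U * (x - xb)^2 / 2 := by ring
  · have hsub2 : Set.uIcc x xb ⊆ S := by rw [Set.uIcc_comm]; exact hsub
    have hintf := hintg x xb hxS hxbS hsub2
    have hlin : ∀ (c' : ℝ), IntervalIntegrable (fun t => c' * (t - xb))
        MeasureTheory.volume x xb :=
      fun c' => (Continuous.intervalIntegrable (continuous_const.mul (continuous_id.sub continuous_const)) _ _)
    have hIccsub : Set.Icc x xb ⊆ Set.uIcc xb x := Set.Icc_subset_uIcc'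
    have hsym : (∫ t in xb..x, (V t - V xb)) = -(∫ t in x..xb, (V t - V xb)) := by
      rw [intervalIntegral.integral_symm]
    constructor
    · have := intervalIntegral.integral_mono_on h hintf (hlin L)
        (fun t ht => (hhi t (hIccsub ht) ht.2).2)
      rw [intervalIntegral.integral_const_mul, hid x xb] at this
      rw [hsym]
      nlinarith [this]
    · have := intervalIntegral.integral_mono_on h (hlin U) hintf
        (fun t ht => (hhi t (hIccsub ht) ht.2).1)
      rw [intervalIntegral.integral_const_mul, hid x xb] at this
      rw [hsym]
      nlinarith [this]
end

section
/- Let s₁, s₂ ≥ 1, let j = (j₁,j₂), r = (r₁,r₂) ∈ ℕ₀², set s := (s₁,s₂), and let f : ℝ → ℂ be (s₁+1)-times differentiable and g : ℝ → ℂ be (s₂+1)-times differentiable. If u ∈ D_j^{r,s}(f,g), then there exist u₁ ∈ D_j^{r+(1,0),s+(1,0)}(f,g) and u₂ ∈ D_j^{r+(0,1),s+(0,1)}(f,g) such that u′ = u₁ + u₂. -/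
open scoped BigOperators

/-- The index set `𝓘_j^{r,s}` of multi-indices. -/
def Iset (j r s : ℕ × ℕ) : Set ((Fin s.1 → ℕ) × (Fin s.2 → ℕ)) :=
  {α | (∑ p, α.1 p) = j.1 ∧ (∑ p, α.2 p) = j.2 ∧
    (∑ p : Fin s.1, (p.1 + 1) * α.1 p) = r.1 ∧
    (∑ p : Fin s.2, (p.1 + 1) * α.2 p) = r.2}

/-- The monomial `(f⁽¹⁾)^{α₁}⋯(f^{(s₁)})^{α_{s₁}}(g⁽¹⁾)^{α_{s₁+1}}⋯(g^{(s₂)})^{α_{s₁+s₂}}`. -/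
noncomputable def Dmonomial (s : ℕ × ℕ) (f g : ℝ → ℂ)
    (α : (Fin s.1 → ℕ) × (Fin s.2 → ℕ)) : ℝ → ℂ :=
  fun x => (∏ p : Fin s.1, (iteratedDeriv (p.1 + 1) f x) ^ α.1 p) *
    (∏ p : Fin s.2, (iteratedDeriv (p.1 + 1) g x) ^ α.2 p)

/-- The class `D_j^{r,s}(f,g)`. -/
noncomputable def Dset (j r s : ℕ × ℕ) (f g : ℝ → ℂ) : Set (ℝ → ℂ) :=
  {u | ∃ c : ((Fin s.1 → ℕ) × (Fin s.2 → ℕ)) → ℂ,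
    (Function.support c).Finite ∧ (∀ α, c α ≠ 0 → α ∈ Iset j r s) ∧
    u = fun x => ∑ᶠ α, c α * Dmonomial s f g α x}

namespace Statement10Aux

open Finset

/-- One side of a monomial. -/
noncomputable def Pfun (n : ℕ) (φ : ℝ → ℂ) (a : Fin n → ℕ) : ℝ → ℂ :=
  fun x => ∏ p : Fin n, (iteratedDeriv (p.1 + 1) φ x) ^ a p

/-- Decrement the exponent at `q` and increment it at `q+1`. -/
def bump {n : ℕ} (a : Fin n → ℕ) (q : Fin n) : Fin (n + 1) → ℕ :=
  fun p => (Fin.snoc (Function.update a q (a q - 1)) 0 : Fin (n + 1) → ℕ) p +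
    if p = q.succ then 1 else 0

lemma sum_mul_update {n : ℕ} (w a : Fin n → ℕ) (q : Fin n) (m : ℕ) :
    ∑ p, w p * Function.update a q m p = w q * m + ∑ p ∈ Finset.univ.erase q, w p * a p := by
  classical
  rw [← Finset.add_sum_erase _ _ (Finset.mem_univ q)]
  congr 1
  · simp
  · exact Finset.sum_congr rfl fun p hp => by
      rw [Function.update_of_ne (Finset.ne_of_mem_erase hp)]

lemma prod_pow_update {n : ℕ} (H : Fin n → ℂ) (a : Fin n → ℕ) (q : Fin n) (m : ℕ) :
    ∏ p, H p ^ Function.update a q m p = H q ^ m * ∏ p ∈ Finset.univ.erase q, H p ^ a p := by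
  classical
  rw [← Finset.mul_prod_erase _ _ (Finset.mem_univ q)]
  congr 1
  · simp
  · exact Finset.prod_congr rfl fun p hp => by
      rw [Function.update_of_ne (Finset.ne_of_mem_erase hp)]

lemma bump_sum {n : ℕ} (a : Fin n → ℕ) (q : Fin n) (h : 1 ≤ a q) :
    ∑ p, bump a q p = ∑ p, a p := by
  classical
  obtain ⟨m, hm⟩ : ∃ m, a q = m + 1 := ⟨a q - 1, by omega⟩
  simp only [bump]
  rw [Finset.sum_add_distrib]
  have h1 : ∑ p : Fin (n+1), (Fin.snoc (Function.update a q (a q - 1)) 0 : Fin (n+1) → ℕ) p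
      = ∑ p : Fin n, Function.update a q (a q - 1) p := by
    rw [Fin.sum_univ_castSucc]
    simp
  have h2 : ∑ p : Fin (n+1), (if p = q.succ then 1 else 0)
      = 1 := by
    rw [Finset.sum_ite_eq']
    simp
  rw [h1, h2]
  have h3 : ∑ p : Fin n, Function.update a q (a q - 1) p
      = 1 * (a q - 1) + ∑ p ∈ Finset.univ.erase q, 1 * a p := by
    simpa using sum_mul_update (fun _ => 1) a q (a q - 1)
  have h4 : ∑ p, a p = a q + ∑ p ∈ Finset.univ.erase q, a p :=
    (Finset.add_sum_erase _ _ (Finset.mem_univ q)).symm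
  simp only [one_mul] at h3
  omega

lemma bump_wsum {n : ℕ} (a : Fin n → ℕ) (q : Fin n) (h : 1 ≤ a q) :
    ∑ p : Fin (n+1), (p.1 + 1) * bump a q p = (∑ p : Fin n, (p.1 + 1) * a p) + 1 := by
  classical
  simp only [bump, Nat.mul_add]
  rw [Finset.sum_add_distrib]
  have h1 : ∑ p : Fin (n+1),
        (p.1 + 1) * (Fin.snoc (Function.update a q (a q - 1)) 0 : Fin (n+1) → ℕ) p
      = ∑ p : Fin n, (p.1 + 1) * Function.update a q (a q - 1) p := by
    rw [Fin.sum_univ_castSucc]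
    simp
  have h2 : ∑ p : Fin (n+1), (p.1 + 1) * (if p = q.succ then 1 else 0)
      = q.1 + 2 := by
    simp only [mul_ite, mul_one, mul_zero]
    rw [Finset.sum_ite_eq']
    simp
  rw [h1, h2, sum_mul_update]
  have h4 : ∑ p : Fin n, (p.1 + 1) * a p
      = (q.1 + 1) * a q + ∑ p ∈ Finset.univ.erase q, (p.1 + 1) * a p :=
    (Finset.add_sum_erase _ _ (Finset.mem_univ q)).symm
  obtain ⟨m, hm⟩ : ∃ m, a q = m + 1 := ⟨a q - 1, by omega⟩
  rw [h4, hm]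
  have : (q.1 + 1) * (m + 1) = (q.1 + 1) * m + (q.1 + 1) := by ring
  have hsub : m + 1 - 1 = m := rfl
  rw [hsub, this]
  omega

lemma key {n : ℕ} (H : Fin (n + 1) → ℂ) (a : Fin n → ℕ) (q : Fin n) :
    (a q : ℂ) * ∏ p : Fin (n + 1), H p ^ bump a q p
      = (∏ p ∈ Finset.univ.erase q, H p.castSucc ^ a p) *
        ((a q : ℂ) * H q.castSucc ^ (a q - 1) * H q.succ) := by
  classical
  have h1 : ∏ p : Fin (n + 1), H p ^ bump a q p
      = (H q.castSucc ^ (a q - 1) * ∏ p ∈ Finset.univ.erase q, H p.castSucc ^ a p) * H q.succ := by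
    simp only [bump, pow_add]
    rw [Finset.prod_mul_distrib]
    congr 1
    · rw [Fin.prod_univ_castSucc]
      simp only [Fin.snoc_castSucc, Fin.snoc_last, pow_zero, mul_one]
      exact prod_pow_update (fun p => H p.castSucc) a q (a q - 1)
    · simp only [pow_ite, pow_one, pow_zero]
      rw [Finset.prod_ite_eq']
      simp
  rw [h1]
  ring

lemma hasDerivAt_P {n : ℕ} {φ : ℝ → ℂ} (hφ : ContDiff ℝ (n + 1 : ℕ) φ) (a : Fin n → ℕ)
    (x : ℝ) :
    HasDerivAt (Pfun n φ a) (∑ q, (a q : ℂ) * Pfun (n + 1) φ (bump a q) x) x := by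
  classical
  have hder : ∀ p : Fin n, HasDerivAt (fun y => iteratedDeriv (p.1 + 1) φ y ^ a p)
      ((a p : ℂ) * (iteratedDeriv (p.1 + 1) φ x) ^ (a p - 1) * iteratedDeriv (p.1 + 2) φ x) x := by
    intro p
    have h1 : Differentiable ℝ (iteratedDeriv (p.1 + 1) φ) :=
      hφ.differentiable_iteratedDeriv _ (by exact_mod_cast Nat.succ_lt_succ p.2)
    have h2 : HasDerivAt (iteratedDeriv (p.1 + 1) φ) (iteratedDeriv (p.1 + 2) φ x) x := by
      have h3 := (h1 x).hasDerivAt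
      rw [← iteratedDeriv_succ] at h3
      exact h3
    simpa [Function.comp_def] using (hasDerivAt_pow (a p) (iteratedDeriv (p.1 + 1) φ x)).comp x h2
  have hp := HasDerivAt.fun_finsetProd (u := Finset.univ)
    (f := fun (p : Fin n) y => iteratedDeriv (p.1 + 1) φ y ^ a p)
    (f' := fun p => (a p : ℂ) * (iteratedDeriv (p.1 + 1) φ x) ^ (a p - 1) *
      iteratedDeriv (p.1 + 2) φ x) (fun p _ => hder p)
  have hval : (∑ q, (a q : ℂ) * Pfun (n + 1) φ (bump a q) x)
      = ∑ q : Fin n, (∏ p ∈ Finset.univ.erase q, iteratedDeriv (p.1 + 1) φ x ^ a p) •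
        ((a q : ℂ) * (iteratedDeriv (q.1 + 1) φ x) ^ (a q - 1) * iteratedDeriv (q.1 + 2) φ x) := by
    refine Finset.sum_congr rfl fun q _ => ?_
    have := key (fun p : Fin (n+1) => iteratedDeriv (p.1 + 1) φ x) a q
    simp only [Fin.coe_castSucc, Fin.val_succ] at this
    simpa [Pfun, smul_eq_mul] using this
  rw [hval]
  exact hp

section Dclosure

variable {j r s : ℕ × ℕ} {f g : ℝ → ℂ}

lemma Dset_zero : (0 : ℝ → ℂ) ∈ Dset j r s f g := by
  refine ⟨0, by simp, by simp, ?_⟩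
  funext x
  simp

lemma Dset_smul (a : ℂ) {u : ℝ → ℂ} (hu : u ∈ Dset j r s f g) :
    (fun x => a * u x) ∈ Dset j r s f g := by
  obtain ⟨c, hfin, hsub, rfl⟩ := hu
  refine ⟨fun β => a * c β, hfin.subset ?_, fun β h => hsub β (right_ne_zero_of_mul h), ?_⟩
  · intro β hβ
    simp only [Function.mem_support] at hβ ⊢
    exact right_ne_zero_of_mul hβ
  · funext x
    rw [mul_finsum' _ a (hfin.subset (fun β hβ => by
      simp only [Function.mem_support] at hβ ⊢
      exact left_ne_zero_of_mul hβ))]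
    simp [mul_assoc]

lemma Dset_add {u v : ℝ → ℂ} (hu : u ∈ Dset j r s f g) (hv : v ∈ Dset j r s f g) :
    (fun x => u x + v x) ∈ Dset j r s f g := by
  obtain ⟨c, hfin, hsub, rfl⟩ := hu
  obtain ⟨c', hfin', hsub', rfl⟩ := hv
  refine ⟨fun β => c β + c' β, (hfin.union hfin').subset ?_, ?_, ?_⟩
  · intro β hβ
    simp only [Function.mem_support] at hβ
    by_contra hc
    simp only [Set.mem_union, Function.mem_support, not_or, not_not] at hc
    exact hβ (show c β + c' β = 0 by rw [hc.1, hc.2, add_zero])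
  · intro β h
    rcases ne_or_eq (c β) 0 with h1 | h1
    · exact hsub β h1
    · refine hsub' β fun h2 => h ?_
      show c β + c' β = 0
      rw [h1, h2, add_zero]
  · funext x
    rw [← finsum_add_distrib
      (hfin.subset (fun β hβ => by
        simp only [Function.mem_support] at hβ ⊢; exact left_ne_zero_of_mul hβ))
      (hfin'.subset (fun β hβ => by
        simp only [Function.mem_support] at hβ ⊢; exact left_ne_zero_of_mul hβ))]
    congr 1
    funext β
    ring

lemma Dset_finsetSum {ι : Type*} [DecidableEq ι] (T : Finset ι) (v : ι → ℝ → ℂ)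
    (h : ∀ i ∈ T, v i ∈ Dset j r s f g) :
    (fun x => ∑ i ∈ T, v i x) ∈ Dset j r s f g := by
  induction T using Finset.induction_on with
  | empty => simpa [← Pi.zero_def] using (Dset_zero (j := j) (r := r) (s := s) (f := f) (g := g))
  | insert i T' hni ih =>
    simp only [Finset.sum_insert hni]
    exact Dset_add (h i (Finset.mem_insert_self _ _))
      (ih fun i' hi' => h i' (Finset.mem_insert_of_mem hi'))

lemma Dset_monomial {α : (Fin s.1 → ℕ) × (Fin s.2 → ℕ)} (hα : α ∈ Iset j r s) :
    Dmonomial s f g α ∈ Dset j r s f g := by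
  classical
  refine ⟨fun β => if β = α then 1 else 0, (Set.finite_singleton α).subset ?_, ?_, ?_⟩
  · intro β hβ
    simp only [Function.mem_support, ne_eq, ite_eq_right_iff, not_forall] at hβ
    exact hβ.choose
  · intro β h
    by_cases hb : β = α
    · subst hb; exact hα
    · simp [hb] at h
  · funext x
    rw [finsum_eq_single _ α (fun b hb => by simp [hb])]
    simp

end Dclosure

section Pair

variable {j r : ℕ × ℕ} {s₁ s₂ : ℕ} {f g : ℝ → ℂ}

lemma hasDerivAt_mono (hf : ContDiff ℝ (s₁ + 1 : ℕ) f) (hg : ContDiff ℝ (s₂ + 1 : ℕ) g)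
    (α : (Fin s₁ → ℕ) × (Fin s₂ → ℕ)) (x : ℝ) :
    HasDerivAt (Dmonomial (s₁, s₂) f g α)
      ((∑ q, (α.1 q : ℂ) * Dmonomial (s₁ + 1, s₂) f g (bump α.1 q, α.2) x)
        + (∑ q, (α.2 q : ℂ) * Dmonomial (s₁, s₂ + 1) f g (α.1, bump α.2 q) x)) x := by
  have h3 := (hasDerivAt_P hf α.1 x).mul (hasDerivAt_P hg α.2 x)
  have heq : Dmonomial (s₁, s₂) f g α = fun y => Pfun s₁ f α.1 y * Pfun s₂ g α.2 y := rfl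
  rw [heq]
  refine HasDerivAt.congr_deriv h3 (Eq.symm ?_)
  rw [Finset.sum_mul, Finset.mul_sum]
  congr 1
  · refine Finset.sum_congr rfl fun q _ => ?_
    show (α.1 q : ℂ) * (Pfun (s₁ + 1) f (bump α.1 q) x * Pfun s₂ g α.2 x)
      = ((α.1 q : ℂ) * Pfun (s₁ + 1) f (bump α.1 q) x) * Pfun s₂ g α.2 x
    ring
  · refine Finset.sum_congr rfl fun q _ => ?_
    show (α.2 q : ℂ) * (Pfun s₁ f α.1 x * Pfun (s₂ + 1) g (bump α.2 q) x)
      = Pfun s₁ f α.1 x * ((α.2 q : ℂ) * Pfun (s₂ + 1) g (bump α.2 q) x)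
    ring

lemma bumpF_mem {α : (Fin s₁ → ℕ) × (Fin s₂ → ℕ)} (hα : α ∈ Iset j r (s₁, s₂)) (q : Fin s₁)
    (h : 1 ≤ α.1 q) :
    ((bump α.1 q, α.2) : (Fin (s₁ + 1) → ℕ) × (Fin s₂ → ℕ))
      ∈ Iset j (r + (1, 0)) (s₁ + 1, s₂) := by
  obtain ⟨h1, h2, h3, h4⟩ := hα
  refine ⟨?_, h2, ?_, ?_⟩
  · show (∑ p : Fin (s₁ + 1), bump α.1 q p) = j.1
    rw [bump_sum _ _ h]; exact h1
  · show (∑ p : Fin (s₁ + 1), (p.1 + 1) * bump α.1 q p) = (r + (1, 0)).1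
    rw [bump_wsum _ _ h, h3, Prod.fst_add]
  · show (∑ p : Fin s₂, (p.1 + 1) * α.2 p) = (r + (1, 0)).2
    rw [h4, Prod.snd_add]
    rfl

lemma bumpG_mem {α : (Fin s₁ → ℕ) × (Fin s₂ → ℕ)} (hα : α ∈ Iset j r (s₁, s₂)) (q : Fin s₂)
    (h : 1 ≤ α.2 q) :
    ((α.1, bump α.2 q) : (Fin s₁ → ℕ) × (Fin (s₂ + 1) → ℕ))
      ∈ Iset j (r + (0, 1)) (s₁, s₂ + 1) := by
  obtain ⟨h1, h2, h3, h4⟩ := hα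
  refine ⟨h1, ?_, ?_, ?_⟩
  · show (∑ p : Fin (s₂ + 1), bump α.2 q p) = j.2
    rw [bump_sum _ _ h]; exact h2
  · show (∑ p : Fin s₁, (p.1 + 1) * α.1 p) = (r + (0, 1)).1
    rw [h3, Prod.fst_add]
    rfl
  · show (∑ p : Fin (s₂ + 1), (p.1 + 1) * bump α.2 q p) = (r + (0, 1)).2
    rw [bump_wsum _ _ h, h4, Prod.snd_add]

lemma Af_mem {α : (Fin s₁ → ℕ) × (Fin s₂ → ℕ)} (hα : α ∈ Iset j r (s₁, s₂)) :
    (fun x => ∑ q : Fin s₁, (α.1 q : ℂ) * Dmonomial (s₁ + 1, s₂) f g (bump α.1 q, α.2) x)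
      ∈ Dset j (r + (1, 0)) (s₁ + 1, s₂) f g := by
  classical
  refine Dset_finsetSum Finset.univ _ fun q _ => ?_
  by_cases h : α.1 q = 0
  · simp only [h, Nat.cast_zero, zero_mul]
    exact Dset_zero
  · exact Dset_smul _ (Dset_monomial (bumpF_mem hα q (Nat.one_le_iff_ne_zero.2 h)))

lemma Ag_mem {α : (Fin s₁ → ℕ) × (Fin s₂ → ℕ)} (hα : α ∈ Iset j r (s₁, s₂)) :
    (fun x => ∑ q : Fin s₂, (α.2 q : ℂ) * Dmonomial (s₁, s₂ + 1) f g (α.1, bump α.2 q) x)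
      ∈ Dset j (r + (0, 1)) (s₁, s₂ + 1) f g := by
  classical
  refine Dset_finsetSum Finset.univ _ fun q _ => ?_
  by_cases h : α.2 q = 0
  · simp only [h, Nat.cast_zero, zero_mul]
    exact Dset_zero
  · exact Dset_smul _ (Dset_monomial (bumpG_mem hα q (Nat.one_le_iff_ne_zero.2 h)))

end Pair

end Statement10Aux


open Statement10Aux in
/-- If `u ∈ D_j^{r,s}(f,g)`, with `f` being `(s₁+1)`-times and `g` being
`(s₂+1)`-times differentiable, then `u′ = u₁ + u₂` with
`u₁ ∈ D_j^{r+(1,0),s+(1,0)}(f,g)` and `u₂ ∈ D_j^{r+(0,1),s+(0,1)}(f,g)`. -/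
theorem statement10 (s₁ s₂ : ℕ) (hs₁ : 1 ≤ s₁) (hs₂ : 1 ≤ s₂) (j r : ℕ × ℕ)
    (f g : ℝ → ℂ) (hf : ContDiff ℝ (s₁ + 1) f) (hg : ContDiff ℝ (s₂ + 1) g)
    (u : ℝ → ℂ) (hu : u ∈ Dset j r (s₁, s₂) f g) :
    ∃ u₁ ∈ Dset j (r + (1, 0)) ((s₁, s₂) + (1, 0)) f g,
      ∃ u₂ ∈ Dset j (r + (0, 1)) ((s₁, s₂) + (0, 1)) f g,
        deriv u = u₁ + u₂ := by
  classical
  obtain ⟨c, hfin, hsub, rfl⟩ := hu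
  have hf' : ContDiff ℝ (s₁ + 1 : ℕ) f := by exact_mod_cast hf
  have hg' : ContDiff ℝ (s₂ + 1 : ℕ) g := by exact_mod_cast hg
  set T := hfin.toFinset with hT
  have hrep : (fun x => ∑ᶠ α, c α * Dmonomial (s₁, s₂) f g α x)
      = fun x => ∑ α ∈ T, c α * Dmonomial (s₁, s₂) f g α x := by
    funext x
    refine finsum_eq_sum_of_support_subset _ fun β hβ => ?_
    simp only [Function.mem_support] at hβ
    exact hfin.mem_toFinset.2 (left_ne_zero_of_mul hβ)
  refine ⟨fun x => ∑ α ∈ T, c α *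
      ∑ q : Fin s₁, (α.1 q : ℂ) * Dmonomial (s₁ + 1, s₂) f g (bump α.1 q, α.2) x, ?_,
    fun x => ∑ α ∈ T, c α *
      ∑ q : Fin s₂, (α.2 q : ℂ) * Dmonomial (s₁, s₂ + 1) f g (α.1, bump α.2 q) x, ?_, ?_⟩
  · exact Dset_finsetSum T _ fun α hα =>
      Dset_smul _ (Af_mem (hsub α (hfin.mem_toFinset.1 hα)))
  · exact Dset_finsetSum T _ fun α hα =>
      Dset_smul _ (Ag_mem (hsub α (hfin.mem_toFinset.1 hα)))
  · funext x
    have hder : HasDerivAt (fun x => ∑ᶠ α, c α * Dmonomial (s₁, s₂) f g α x)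
        (∑ α ∈ T, c α *
          ((∑ q : Fin s₁, (α.1 q : ℂ) * Dmonomial (s₁ + 1, s₂) f g (bump α.1 q, α.2) x)
            + ∑ q : Fin s₂, (α.2 q : ℂ) * Dmonomial (s₁, s₂ + 1) f g (α.1, bump α.2 q) x)) x := by
      rw [hrep]
      exact HasDerivAt.fun_sum fun α _ => (hasDerivAt_mono hf' hg' α x).const_mul (c α)
    rw [hder.deriv]
    rw [Pi.add_apply]
    simp only [mul_add, Finset.sum_add_distrib]
end

section
/- Let s = (s₁,s₂) and s̃ = (s̃₁,s̃₂) with all components ≥ 1, let j, r, j̃, r̃ ∈ ℕ₀², and let f, g : ℝ → ℂ be max{s₁,s̃₁}-times resp. max{s₂,s̃₂}-times differentiable. If u ∈ D_j^{r,s}(f,g) and ũ ∈ D_{j̃}^{r̃,s̃}(f,g), then u·ũ ∈ D_{j+j̃}^{r+r̃, t}(f,g), where t := (max{s₁,s̃₁}, max{s₂,s̃₂}); consequently u·ũ ∈ D_{j+j̃}^{r+r̃, s+s̃−(1,1)}(f,g). -/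
open scoped BigOperators

namespace S11

def pad {n m : ℕ} (_h : n ≤ m) (α : Fin n → ℕ) : Fin m → ℕ :=
  fun p => if h' : (p : ℕ) < n then α ⟨p, h'⟩ else 0

lemma pad_injective {n m : ℕ} (h : n ≤ m) : Function.Injective (pad h) := by
  intro a b hab
  funext p
  have := congrFun hab ⟨p, lt_of_lt_of_le p.2 h⟩
  simpa [pad, p.2] using this

lemma sum_pad {M : Type*} [AddCommMonoid M] {n m : ℕ} (h : n ≤ m) (α : Fin n → ℕ)
    (F : ℕ → ℕ → M) (hF : ∀ k, F k 0 = 0) :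
    ∑ p : Fin m, F p (pad h α p) = ∑ p : Fin n, F p (α p) := by
  classical
  set f : ℕ → M := fun i => if h' : i < n then F i (α ⟨i, h'⟩) else 0 with hf
  have key : ∀ (p : Fin m), F p.1 (pad h α p) = f p.1 := by
    intro p
    by_cases h' : (p : ℕ) < n <;> simp [pad, hf, h', hF]
  calc ∑ p : Fin m, F p.1 (pad h α p) = ∑ p : Fin m, f p.1 := Finset.sum_congr rfl (fun p _ => key p)
    _ = ∑ i ∈ Finset.range m, f i := Fin.sum_univ_eq_sum_range f m
    _ = ∑ i ∈ Finset.range n, f i := by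
        refine (Finset.sum_subset (Finset.range_subset_range.2 h) ?_).symm
        intro i _ hi
        simp only [Finset.mem_range] at hi
        simp [hf, hi]
    _ = ∑ p : Fin n, f p.1 := (Fin.sum_univ_eq_sum_range f n).symm
    _ = ∑ p : Fin n, F p.1 (α p) := Finset.sum_congr rfl (fun p _ => by simp [hf, p.2])

lemma prod_pad {M : Type*} [CommMonoid M] {n m : ℕ} (h : n ≤ m) (α : Fin n → ℕ)
    (F : ℕ → ℕ → M) (hF : ∀ k, F k 0 = 1) :
    ∏ p : Fin m, F p (pad h α p) = ∏ p : Fin n, F p (α p) := by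
  classical
  set f : ℕ → M := fun i => if h' : i < n then F i (α ⟨i, h'⟩) else 1 with hf
  have key : ∀ (p : Fin m), F p.1 (pad h α p) = f p.1 := by
    intro p
    by_cases h' : (p : ℕ) < n <;> simp [pad, hf, h', hF]
  calc ∏ p : Fin m, F p.1 (pad h α p) = ∏ p : Fin m, f p.1 := Finset.prod_congr rfl (fun p _ => key p)
    _ = ∏ i ∈ Finset.range m, f i := Fin.prod_univ_eq_prod_range f m
    _ = ∏ i ∈ Finset.range n, f i := by
        refine (Finset.prod_subset (Finset.range_subset_range.2 h) ?_).symm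
        intro i _ hi
        simp only [Finset.mem_range] at hi
        simp [hf, hi]
    _ = ∏ p : Fin n, f p.1 := (Fin.prod_univ_eq_prod_range f n).symm
    _ = ∏ p : Fin n, F p.1 (α p) := Finset.prod_congr rfl (fun p _ => by simp [hf, p.2])

lemma Dset_mono {j r s t : ℕ × ℕ} (h1 : s.1 ≤ t.1) (h2 : s.2 ≤ t.2) (f g : ℝ → ℂ) :
    Dset j r s f g ⊆ Dset j r t f g := by
  classical
  rintro u ⟨c, hfin, hidx, rfl⟩
  set e : ((Fin s.1 → ℕ) × (Fin s.2 → ℕ)) → ((Fin t.1 → ℕ) × (Fin t.2 → ℕ)) :=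
    fun α => (pad h1 α.1, pad h2 α.2) with he
  have einj : Function.Injective e := by
    intro a b hab
    rw [Prod.ext_iff] at hab
    exact Prod.ext (pad_injective h1 hab.1) (pad_injective h2 hab.2)
  have hMon : ∀ α x, Dmonomial t f g (e α) x = Dmonomial s f g α x := by
    intro α x
    simp only [Dmonomial, he]
    rw [prod_pad h1 α.1 (fun k a => (iteratedDeriv (k + 1) f x) ^ a) (fun k => pow_zero _),
      prod_pad h2 α.2 (fun k a => (iteratedDeriv (k + 1) g x) ^ a) (fun k => pow_zero _)]
  have hsupp : Function.support (Function.extend e c 0) ⊆ e '' Function.support c := by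
    intro β hβ
    by_cases hr : ∃ α, e α = β
    · obtain ⟨α, rfl⟩ := hr
      rw [Function.mem_support, einj.extend_apply] at hβ
      exact ⟨α, hβ, rfl⟩
    · rw [Function.mem_support, Function.extend_apply' _ _ _ hr] at hβ
      simp at hβ
  refine ⟨Function.extend e c 0, (hfin.image e).subset hsupp, ?_, ?_⟩
  · intro β hβ
    obtain ⟨α, hα, rfl⟩ := hsupp hβ
    obtain ⟨e1, e2, e3, e4⟩ := hidx α hα
    refine ⟨?_, ?_, ?_, ?_⟩
    · show ∑ p : Fin t.1, pad h1 α.1 p = j.1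
      rw [← e1]
      simpa using sum_pad h1 α.1 (fun _ a => a) (fun _ => rfl)
    · show ∑ p : Fin t.2, pad h2 α.2 p = j.2
      rw [← e2]
      simpa using sum_pad h2 α.2 (fun _ a => a) (fun _ => rfl)
    · show ∑ p : Fin t.1, (p.1 + 1) * pad h1 α.1 p = r.1
      rw [← e3]
      simpa using sum_pad h1 α.1 (fun k a => (k + 1) * a) (fun k => by simp)
    · show ∑ p : Fin t.2, (p.1 + 1) * pad h2 α.2 p = r.2
      rw [← e4]
      simpa using sum_pad h2 α.2 (fun k a => (k + 1) * a) (fun k => by simp)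
  · funext x
    have hsub : Function.support (fun β => Function.extend e c 0 β * Dmonomial t f g β x)
        ⊆ ↑(Finset.image e hfin.toFinset) := by
      intro β hβ
      have : Function.extend e c 0 β ≠ 0 := left_ne_zero_of_mul hβ
      obtain ⟨α, hα, rfl⟩ := hsupp this
      simp only [Finset.coe_image, Set.Finite.coe_toFinset]
      exact ⟨α, hα, rfl⟩
    rw [finsum_eq_sum_of_support_subset _ hsub,
      Finset.sum_image (fun a _ b _ hab => einj hab)]
    have : ∀ α ∈ hfin.toFinset,
        Function.extend e c 0 (e α) * Dmonomial t f g (e α) x = c α * Dmonomial s f g α x := by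
      intro α _
      rw [einj.extend_apply, hMon]
    rw [Finset.sum_congr rfl this]
    refine finsum_eq_sum_of_support_subset (fun α => c α * Dmonomial s f g α x) (s := hfin.toFinset) ?_
    intro α hα
    have := Function.support_mul_subset_left c (fun α => Dmonomial s f g α x) hα
    simpa using this

lemma Iset_add {j r j' r' t : ℕ × ℕ} {α α' : (Fin t.1 → ℕ) × (Fin t.2 → ℕ)}
    (h : α ∈ Iset j r t) (h' : α' ∈ Iset j' r' t) : α + α' ∈ Iset (j + j') (r + r') t := by
  obtain ⟨a1, a2, a3, a4⟩ := h
  obtain ⟨b1, b2, b3, b4⟩ := h'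
  refine ⟨?_, ?_, ?_, ?_⟩ <;>
    simp only [Prod.fst_add, Prod.snd_add, Pi.add_apply, Nat.mul_add, Finset.sum_add_distrib,
      a1, a2, a3, a4, b1, b2, b3, b4]

lemma Dmonomial_add {t : ℕ × ℕ} (f g : ℝ → ℂ) (α α' : (Fin t.1 → ℕ) × (Fin t.2 → ℕ)) (x : ℝ) :
    Dmonomial t f g (α + α') x = Dmonomial t f g α x * Dmonomial t f g α' x := by
  simp only [Dmonomial, Prod.fst_add, Prod.snd_add, Pi.add_apply, pow_add,
    Finset.prod_mul_distrib]
  ring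

lemma Dset_mul {j r j' r' t : ℕ × ℕ} (f g : ℝ → ℂ) {u u' : ℝ → ℂ}
    (hu : u ∈ Dset j r t f g) (hu' : u' ∈ Dset j' r' t f g) :
    (fun x => u x * u' x) ∈ Dset (j + j') (r + r') t f g := by
  classical
  obtain ⟨c, hc, hic, rfl⟩ := hu
  obtain ⟨c', hc', hic', rfl⟩ := hu'
  set S := hc.toFinset with hS
  set S' := hc'.toFinset with hS'
  set C : ((Fin t.1 → ℕ) × (Fin t.2 → ℕ)) → ℂ :=
    fun β => ∑ p ∈ S ×ˢ S', if p.1 + p.2 = β then c p.1 * c' p.2 else 0 with hC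
  set T := Finset.image (fun p => p.1 + p.2) (S ×ˢ S') with hT
  have hCsupp : Function.support C ⊆ ↑T := by
    intro β hβ
    obtain ⟨p, hp, hne⟩ := Finset.exists_ne_zero_of_sum_ne_zero hβ
    have : p.1 + p.2 = β := by by_contra hcon; simp [hcon] at hne
    exact Finset.mem_coe.2 (Finset.mem_image.2 ⟨p, hp, this⟩)
  refine ⟨C, T.finite_toSet.subset hCsupp, ?_, ?_⟩
  · intro β hβ
    obtain ⟨p, hp, hne⟩ := Finset.exists_ne_zero_of_sum_ne_zero hβ
    have heq : p.1 + p.2 = β := by by_contra hcon; simp [hcon] at hne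
    rw [heq] at hne
    have h1 : c p.1 ≠ 0 := fun h => hne (by simp [h, heq])
    have h2 : c' p.2 ≠ 0 := fun h => hne (by simp [h, heq])
    rw [← heq]
    exact Iset_add (hic _ h1) (hic' _ h2)
  · funext x
    have lhs1 : (∑ᶠ α, c α * Dmonomial t f g α x) = ∑ α ∈ S, c α * Dmonomial t f g α x :=
      finsum_eq_sum_of_support_subset _ (by
        intro α hα
        simp only [hS, Set.Finite.coe_toFinset]
        exact Function.support_mul_subset_left _ _ hα)
    have lhs2 : (∑ᶠ α, c' α * Dmonomial t f g α x) = ∑ α ∈ S', c' α * Dmonomial t f g α x :=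
      finsum_eq_sum_of_support_subset _ (by
        intro α hα
        simp only [hS', Set.Finite.coe_toFinset]
        exact Function.support_mul_subset_left _ _ hα)
    have rhs1 : (∑ᶠ β, C β * Dmonomial t f g β x) = ∑ β ∈ T, C β * Dmonomial t f g β x :=
      finsum_eq_sum_of_support_subset _ (by
        intro β hβ
        exact hCsupp (Function.support_mul_subset_left _ _ hβ))
    simp only [lhs1, lhs2, rhs1]
    have step : ∀ β ∈ T, C β * Dmonomial t f g β x
        = ∑ p ∈ S ×ˢ S', if p.1 + p.2 = β then c p.1 * c' p.2 * Dmonomial t f g β x else 0 := by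
      intro β _
      rw [hC, Finset.sum_mul]
      exact Finset.sum_congr rfl (fun p _ => by rw [ite_mul, zero_mul])
    have key : ∀ p ∈ S ×ˢ S',
        (∑ β ∈ T, if p.1 + p.2 = β then c p.1 * c' p.2 * Dmonomial t f g β x else 0)
          = (c p.1 * Dmonomial t f g p.1 x) * (c' p.2 * Dmonomial t f g p.2 x) := by
      intro p hp
      have hmem : p.1 + p.2 ∈ T := Finset.mem_image.2 ⟨p, hp, rfl⟩
      rw [Finset.sum_ite_eq T (p.1 + p.2) (fun β => c p.1 * c' p.2 * Dmonomial t f g β x),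
        if_pos hmem, Dmonomial_add]
      ring
    calc (∑ α ∈ S, c α * Dmonomial t f g α x) * ∑ α ∈ S', c' α * Dmonomial t f g α x
        = ∑ α ∈ S, ∑ α' ∈ S',
            (c α * Dmonomial t f g α x) * (c' α' * Dmonomial t f g α' x) :=
          Finset.sum_mul_sum _ _ _ _
      _ = ∑ p ∈ S ×ˢ S', (c p.1 * Dmonomial t f g p.1 x) * (c' p.2 * Dmonomial t f g p.2 x) :=
          (Finset.sum_product' _ _ _).symm
      _ = ∑ p ∈ S ×ˢ S',
            ∑ β ∈ T, if p.1 + p.2 = β then c p.1 * c' p.2 * Dmonomial t f g β x else 0 :=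
          (Finset.sum_congr rfl key).symm
      _ = ∑ β ∈ T, ∑ p ∈ S ×ˢ S',
            (if p.1 + p.2 = β then c p.1 * c' p.2 * Dmonomial t f g β x else 0) :=
          Finset.sum_comm
      _ = ∑ β ∈ T, C β * Dmonomial t f g β x := (Finset.sum_congr rfl step).symm

end S11

/-- If `u ∈ D_j^{r,s}(f,g)` and `ũ ∈ D_{j̃}^{r̃,s̃}(f,g)`, then
`u·ũ ∈ D_{j+j̃}^{r+r̃,max{s,s̃}}(f,g)` and consequently
`u·ũ ∈ D_{j+j̃}^{r+r̃,s+s̃−(1,1)}(f,g)`. -/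
theorem statement11 (s s' : ℕ × ℕ) (hs1 : 1 ≤ s.1) (hs2 : 1 ≤ s.2)
    (hs1' : 1 ≤ s'.1) (hs2' : 1 ≤ s'.2) (j r j' r' : ℕ × ℕ)
    (f g : ℝ → ℂ) (hf : ContDiff ℝ (max s.1 s'.1) f) (hg : ContDiff ℝ (max s.2 s'.2) g)
    (u u' : ℝ → ℂ) (hu : u ∈ Dset j r s f g) (hu' : u' ∈ Dset j' r' s' f g) :
    (fun x => u x * u' x) ∈ Dset (j + j') (r + r') (max s.1 s'.1, max s.2 s'.2) f g ∧
      (fun x => u x * u' x) ∈ Dset (j + j') (r + r') (s + s' - (1, 1)) f g := by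
  have h1 : (fun x => u x * u' x) ∈ Dset (j + j') (r + r') (max s.1 s'.1, max s.2 s'.2) f g :=
    S11.Dset_mul f g
      (S11.Dset_mono (le_max_left _ _) (le_max_left _ _) f g hu)
      (S11.Dset_mono (le_max_right _ _) (le_max_right _ _) f g hu')
  refine ⟨h1, S11.Dset_mono ?_ ?_ f g h1⟩
  · show max s.1 s'.1 ≤ s.1 + s'.1 - 1
    omega
  · show max s.2 s'.2 ≤ s.2 + s'.2 - 1
    omega
end

section
/- Let λ > 0, m ≥ 0 and 0 < η < μ ≤ 1, and let a, b ∈ ℂ satisfy |Re a + m| ≤ ηλ, |Re b − m| ≤ ηλ, |Im a − Im b| ≤ ηλ, and Im a + Im b ≥ μ(|Im a| + |Im b|). Set V_λ := (λ−m−a)(λ+m−b); then V_λ ∉ (−∞,0], and Re(i V_λ^{1/2}) ≥ ((μ−η)/√(η²+(2+2η)²)) (Im a + Im b). Moreover, |Re(i V_λ^{1/2})| ≤ ½ √((1+η)/(1−η)) (|Im a| + |Im b|). -/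
/-- The principal branch of the complex square root, for `z ∉ (−∞,0]`:
`√z = 2^{−1/2}(|z|+Re z)^{1/2} + i·2^{−1/2}·Im z·(|z|+Re z)^{−1/2}`. -/
noncomputable def psqrt (z : ℂ) : ℂ :=
  (Real.sqrt (‖z‖ + z.re) / Real.sqrt 2 : ℝ) +
    Complex.I * ((z.im / (Real.sqrt 2 * Real.sqrt (‖z‖ + z.re)) : ℝ) : ℂ)

private lemma st15_abs_le_of_sq_le {x y : ℝ} (hy : 0 ≤ y) (h : x ^ 2 ≤ y ^ 2) : |x| ≤ y := by
  have h2 := Real.sqrt_le_sqrt h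
  rwa [Real.sqrt_sq_eq_abs, Real.sqrt_sq hy] at h2

private lemma st15_le_of_sq_le {x y : ℝ} (hy : 0 ≤ y) (h : x ^ 2 ≤ y ^ 2) : x ≤ y :=
  (le_abs_self x).trans (st15_abs_le_of_sq_le hy h)

private lemma st15_CS {α β u v q : ℝ} (hq0 : 0 ≤ q)
    (h : q ^ 2 = (α ^ 2 + u ^ 2) * (β ^ 2 + v ^ 2)) : α * β + u * v ≤ q := by
  apply st15_le_of_sq_le hq0
  nlinarith [sq_nonneg (α * v - β * u)]

private lemma st15_N (lam η μ u v p r : ℝ) (hη : 0 < η) (hημ : η < μ) (hl : 0 < lam)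
    (hp : |p| ≤ η * lam) (hr : |r| ≤ η * lam) (hμs : μ * (|u| + |v|) ≤ u + v) :
    lam * (μ - η) * (u + v) ≤ μ * ((lam + p) * v + (lam + r) * u) := by
  have hμ0 : 0 < μ := hη.trans hημ
  have hpv : -(η * lam * |v|) ≤ p * v := by
    have h1 : |p * v| ≤ η * lam * |v| := by
      rw [abs_mul]; exact mul_le_mul_of_nonneg_right hp (abs_nonneg v)
    linarith [neg_abs_le (p * v)]
  have hru : -(η * lam * |u|) ≤ r * u := by
    have h1 : |r * u| ≤ η * lam * |u| := by
      rw [abs_mul]; exact mul_le_mul_of_nonneg_right hr (abs_nonneg u)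
    linarith [neg_abs_le (r * u)]
  have k1 : η * lam * (μ * (|u| + |v|)) ≤ η * lam * (u + v) :=
    mul_le_mul_of_nonneg_left hμs (by positivity)
  have k2 : μ * (-(η * lam * |v|)) ≤ μ * (p * v) := mul_le_mul_of_nonneg_left hpv hμ0.le
  have k3 : μ * (-(η * lam * |u|)) ≤ μ * (r * u) := mul_le_mul_of_nonneg_left hru hμ0.le
  nlinarith [k1, k2, k3]

private lemma st15_N2 {lam μ η s n : ℝ} (hμ1 : μ ≤ 1) (hημ : η < μ) (hη : 0 < η)
    (hl : 0 < lam) (hs : 0 ≤ s) (h : lam * (μ - η) * s ≤ μ * n) :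
    lam ^ 2 * (μ - η) ^ 2 * s ^ 2 ≤ n ^ 2 := by
  have hμ0 : 0 < μ := hη.trans hημ
  have h0 : 0 ≤ lam * (μ - η) * s := mul_nonneg (mul_nonneg hl.le (by linarith)) hs
  have h1 : (lam * (μ - η) * s) ^ 2 ≤ (μ * n) ^ 2 := by
    have := mul_self_le_mul_self h0 h
    nlinarith [this]
  have hμ2 : 0 ≤ 1 - μ ^ 2 := by nlinarith
  have h2 : (μ * n) ^ 2 ≤ n ^ 2 := by nlinarith [mul_nonneg hμ2 (sq_nonneg n)]
  nlinarith [h1, h2]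

private lemma st15_M {α β u v η lam c2 : ℝ} (hl : 0 < lam) (hα0 : 0 < α) (hβ0 : 0 < β)
    (hα2 : α ≤ (1 + η) * lam) (hβ2 : β ≤ (1 + η) * lam)
    (hd : (u - v) ^ 2 ≤ (η * lam) ^ 2) (hc2 : 0 ≤ c2) (hc14 : c2 ≤ 1 / 4) :
    (α * β - u * v) + c2 * (u + v) ^ 2 ≤ ((1 + η) ^ 2 + η ^ 2 / 4) * lam ^ 2 := by
  have e1 : α * β ≤ ((1 + η) * lam) * ((1 + η) * lam) :=
    mul_le_mul hα2 hβ2 hβ0.le (hα0.le.trans hα2)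
  nlinarith [e1, hd, mul_nonneg (by linarith : (0:ℝ) ≤ 1 / 4 - c2) (sq_nonneg (u + v))]

private lemma st15_key {w n c2 s M lam μη : ℝ} (hc2 : 0 ≤ c2) (hM : w + c2 * s ^ 2 ≤ M)
    (h4 : 4 * c2 * M = μη ^ 2 * lam ^ 2) (hn : lam ^ 2 * μη ^ 2 * s ^ 2 ≤ n ^ 2) :
    (w + 2 * c2 * s ^ 2) ^ 2 ≤ w ^ 2 + n ^ 2 := by
  have e1 : 4 * (c2 * s ^ 2) * (w + c2 * s ^ 2) ≤ 4 * (c2 * s ^ 2) * M :=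
    mul_le_mul_of_nonneg_left hM (by positivity)
  have e2 : 4 * (c2 * s ^ 2) * M = μη ^ 2 * lam ^ 2 * s ^ 2 := by linear_combination s ^ 2 * h4
  nlinarith [e1, e2, hn]

private lemma st15_core9 {α β x y η : ℝ} (hx : 0 ≤ x) (hy : 0 ≤ y) (hα0 : 0 < α)
    (hβ0 : 0 < β) (hη : 0 < η) (r1 : (1 - η) * α ≤ (1 + η) * β)
    (r2 : (1 - η) * β ≤ (1 + η) * α) :
    (1 - η) * (α * y + β * x) ^ 2 ≤ (1 + η) * (α * β) * (x + y) ^ 2 := by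
  have r1' := mul_le_mul_of_nonneg_right r1 (mul_nonneg hα0.le (sq_nonneg y))
  have r2' := mul_le_mul_of_nonneg_right r2 (mul_nonneg hβ0.le (sq_nonneg x))
  have r3 : (1 - η) * (2 * (α * β)) * (x * y) ≤ (1 + η) * (2 * (α * β)) * (x * y) := by
    have h1 : (1 - η) * (2 * (α * β)) ≤ (1 + η) * (2 * (α * β)) := by nlinarith [mul_pos hα0 hβ0]
    exact mul_le_mul_of_nonneg_right h1 (mul_nonneg hx hy)
  nlinarith [r1', r2', r3]

private lemma st15_fin {η AB w X T n : ℝ} (hη1 : η < 1) (hAB : 0 < AB) (hw : 0 ≤ w)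
    (h8 : 2 * AB * w ≤ n ^ 2) (h9 : (1 - η) * n ^ 2 ≤ (1 + η) * AB * T ^ 2)
    (hX : X * (4 * (1 - η)) = (1 + η) * T ^ 2) : w / 2 ≤ X := by
  have hη0 : (0:ℝ) < 1 - η := by linarith
  have e1 : (1 - η) * (2 * AB * w) ≤ (1 - η) * n ^ 2 := mul_le_mul_of_nonneg_left h8 hη0.le
  have e2 : (1 + η) * AB * T ^ 2 = AB * (X * (4 * (1 - η))) := by rw [hX]; ring
  have e3 : (1 - η) * (2 * AB * w) ≤ AB * (X * (4 * (1 - η))) := by linarith [e1, h9]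
  nlinarith [e3, mul_pos hAB hη0]

private lemma st15_nonneg {μ n : ℝ} (h : 0 < μ) (h2 : 0 ≤ μ * n) : 0 ≤ n :=
  le_of_not_gt fun hn => absurd h2 (not_le.mpr (mul_neg_of_pos_of_neg h hn))

private lemma st15_r {η lam x y : ℝ} (hη : 0 < η) (hη1 : η < 1) (hl : 0 < lam)
    (hx : x ≤ (1 + η) * lam) (hy : (1 - η) * lam ≤ y) : (1 - η) * x ≤ (1 + η) * y := by
  nlinarith

private lemma st15_c14 {η μ : ℝ} (hη : 0 < η) (hημ : η < μ) (hμ : μ ≤ 1) :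
    (μ - η) ^ 2 ≤ 1 / 4 * (η ^ 2 + (2 + 2 * η) ^ 2) := by
  nlinarith

set_option maxHeartbeats 1000000

/-- Let `λ > 0`, `m ≥ 0`, `0 < η < μ ≤ 1` and `a, b ∈ ℂ` with
`|Re a + m| ≤ ηλ`, `|Re b − m| ≤ ηλ`, `|Im a − Im b| ≤ ηλ` and
`Im a + Im b ≥ μ(|Im a|+|Im b|)`. With `V_λ := (λ−m−a)(λ+m−b)` one has `V_λ ∉ (−∞,0]`,
`Re(i V_λ^{1/2}) ≥ ((μ−η)/√(η²+(2+2η)²))(Im a + Im b)`, and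
`|Re(i V_λ^{1/2})| ≤ ½√((1+η)/(1−η))(|Im a|+|Im b|)`. -/
theorem statement15 (lam m η μ : ℝ) (hlam : 0 < lam) (hm : 0 ≤ m)
    (hη : 0 < η) (hημ : η < μ) (hμ : μ ≤ 1) (a b : ℂ)
    (ha : |a.re + m| ≤ η * lam) (hb : |b.re - m| ≤ η * lam)
    (hab : |a.im - b.im| ≤ η * lam)
    (habμ : μ * (|a.im| + |b.im|) ≤ a.im + b.im) :
    (¬((((lam : ℂ) - (m : ℂ) - a) * ((lam : ℂ) + (m : ℂ) - b)).im = 0 ∧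
        (((lam : ℂ) - (m : ℂ) - a) * ((lam : ℂ) + (m : ℂ) - b)).re ≤ 0)) ∧
      ((μ - η) / Real.sqrt (η ^ 2 + (2 + 2 * η) ^ 2)) * (a.im + b.im) ≤
        (Complex.I * psqrt (((lam : ℂ) - (m : ℂ) - a) * ((lam : ℂ) + (m : ℂ) - b))).re ∧
      |(Complex.I * psqrt (((lam : ℂ) - (m : ℂ) - a) * ((lam : ℂ) + (m : ℂ) - b))).re| ≤
        (1 / 2) * Real.sqrt ((1 + η) / (1 - η)) * (|a.im| + |b.im|) := by
  have hη1 : η < 1 := lt_of_lt_of_le hημ hμ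
  set V : ℂ := (((lam : ℂ) - (m : ℂ) - a) * ((lam : ℂ) + (m : ℂ) - b)) with hV
  set α : ℝ := lam - m - a.re with hαdef
  set β : ℝ := lam + m - b.re with hβdef
  set u : ℝ := a.im with hudef
  set v : ℝ := b.im with hvdef
  set N : ℝ := α * v + β * u with hNdef
  have haL := abs_le.mp ha
  have hbL := abs_le.mp hb
  have habL := abs_le.mp hab
  have hα1 : (1 - η) * lam ≤ α := by simp only [hαdef]; linarith [haL.2]
  have hα2 : α ≤ (1 + η) * lam := by simp only [hαdef]; linarith [haL.1]
  have hβ1 : (1 - η) * lam ≤ β := by simp only [hβdef]; linarith [hbL.2]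
  have hβ2 : β ≤ (1 + η) * lam := by simp only [hβdef]; linarith [hbL.1]
  have h1η : 0 < (1 - η) * lam := mul_pos (by linarith) hlam
  have hα0 : 0 < α := h1η.trans_le hα1
  have hβ0 : 0 < β := h1η.trans_le hβ1
  have hVre : V.re = α * β - u * v := by
    simp [hV, Complex.mul_re, hαdef, hβdef, hudef, hvdef]
  have hVim : V.im = -N := by
    simp [hV, Complex.mul_im, hNdef, hαdef, hβdef, hudef, hvdef]; ring
  set q : ℝ := ‖V‖ with hqdef
  have hq0 : 0 ≤ q := norm_nonneg V
  have hqN : q ^ 2 = V.re ^ 2 + N ^ 2 := by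
    have h := Complex.sq_norm V
    rw [Complex.normSq_apply, hVim] at h
    rw [hqdef, h]; ring
  have hq2 : q ^ 2 = (α ^ 2 + u ^ 2) * (β ^ 2 + v ^ 2) := by
    rw [hqN, hVre, hNdef]; ring
  clear_value V α β u v N q
  -- basic sign facts
  have hTnn : 0 ≤ |u| + |v| := by positivity
  have hs0 : 0 ≤ u + v := le_trans (mul_nonneg (hη.trans hημ).le hTnn) habμ
  -- N lower bound
  have hN : lam * (μ - η) * (u + v) ≤ μ * N := by
    have h := st15_N lam η μ u v (α - lam) (β - lam) hη hημ hlam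
      (by rw [abs_le]; constructor <;> linarith) (by rw [abs_le]; constructor <;> linarith) habμ
    calc lam * (μ - η) * (u + v) ≤ μ * ((lam + (α - lam)) * v + (lam + (β - lam)) * u) := h
      _ = μ * N := by rw [hNdef]; ring
  have hN0 : 0 ≤ N := by
    have h0 : 0 ≤ lam * (μ - η) * (u + v) :=
      mul_nonneg (mul_nonneg hlam.le (by linarith)) hs0
    exact st15_nonneg (hη.trans hημ) (h0.trans hN)
  -- Cauchy–Schwarz facts
  have hlow : α * β + u * v ≤ q := st15_CS hq0 hq2
  have hpos : 0 < q + V.re := by rw [hVre]; linarith [hlow, mul_pos hα0 hβ0]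
  have hqV : V.re ≤ q := st15_le_of_sq_le hq0 (by linarith [hqN, sq_nonneg N])
  -- real part of i·psqrt V
  have hρ : (Complex.I * psqrt V).re = N / (Real.sqrt 2 * Real.sqrt (q + V.re)) := by
    have e : psqrt V = (((Real.sqrt (q + V.re) / Real.sqrt 2 : ℝ)) : ℂ) +
        Complex.I * (((V.im / (Real.sqrt 2 * Real.sqrt (q + V.re)) : ℝ)) : ℂ) := by
      rw [hqdef]; rfl
    rw [e, hVim]
    simp only [Complex.mul_re, Complex.add_re, Complex.add_im, Complex.mul_im,
      Complex.I_re, Complex.I_im, Complex.ofReal_re, Complex.ofReal_im]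
    ring
  have hD0 : 0 < Real.sqrt 2 * Real.sqrt (q + V.re) :=
    mul_pos (Real.sqrt_pos.mpr two_pos) (Real.sqrt_pos.mpr hpos)
  have hρ2 : (N / (Real.sqrt 2 * Real.sqrt (q + V.re))) ^ 2 = (q - V.re) / 2 := by
    rw [div_pow, mul_pow, Real.sq_sqrt (by norm_num : (0:ℝ) ≤ 2), Real.sq_sqrt hpos.le,
      div_eq_div_iff (by positivity : (0:ℝ) < 2 * (q + V.re)).ne' (two_ne_zero (α := ℝ))]
    linear_combination -2 * hqN
  have hρnn : 0 ≤ N / (Real.sqrt 2 * Real.sqrt (q + V.re)) := div_nonneg hN0 hD0.le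
  have hE0 : (0:ℝ) < η ^ 2 + (2 + 2 * η) ^ 2 := by positivity
  refine ⟨?_, ?_, ?_⟩
  · -- V is not on the negative real axis
    rintro ⟨h1, h2⟩
    rw [hVim, neg_eq_zero] at h1
    have h3 : q ^ 2 ≤ (-V.re) ^ 2 := by rw [hqN, h1]; ring_nf; exact le_refl _
    have h4 : q ≤ -V.re := st15_le_of_sq_le (by linarith) h3
    linarith [hpos]
  · -- lower bound
    rw [hρ]
    apply st15_le_of_sq_le hρnn
    rw [hρ2, mul_pow, div_pow, Real.sq_sqrt hE0.le]
    -- need : (μ-η)^2/E * (u+v)^2 ≤ (q - V.re)/2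
    have hc2nn : 0 ≤ (μ - η) ^ 2 / (η ^ 2 + (2 + 2 * η) ^ 2) := by positivity
    have hc14 : (μ - η) ^ 2 / (η ^ 2 + (2 + 2 * η) ^ 2) ≤ 1 / 4 := by
      rw [div_le_iff₀ hE0]; linarith [st15_c14 hη hημ hμ]
    have hd2 : (u - v) ^ 2 ≤ (η * lam) ^ 2 := sq_le_sq' (by linarith [habL.1]) habL.2
    have hM : V.re + ((μ - η) ^ 2 / (η ^ 2 + (2 + 2 * η) ^ 2)) * (u + v) ^ 2 ≤
        ((1 + η) ^ 2 + η ^ 2 / 4) * lam ^ 2 := by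
      rw [hVre]
      exact st15_M hlam hα0 hβ0 hα2 hβ2 hd2 hc2nn hc14
    have h4 : 4 * ((μ - η) ^ 2 / (η ^ 2 + (2 + 2 * η) ^ 2)) *
        (((1 + η) ^ 2 + η ^ 2 / 4) * lam ^ 2) = (μ - η) ^ 2 * lam ^ 2 := by
      field_simp
      ring
    have hn2 : lam ^ 2 * (μ - η) ^ 2 * (u + v) ^ 2 ≤ N ^ 2 :=
      st15_N2 hμ hημ hη hlam hs0 hN
    have hkey := st15_key hc2nn hM h4 hn2
    rw [← hqN] at hkey
    have hq3 : V.re + 2 * ((μ - η) ^ 2 / (η ^ 2 + (2 + 2 * η) ^ 2)) * (u + v) ^ 2 ≤ q :=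
      st15_le_of_sq_le hq0 hkey
    linarith [hq3]
  · -- upper bound
    rw [hρ]
    apply st15_abs_le_of_sq_le (by positivity)
    rw [hρ2]
    have hB2 : ((1 / 2) * Real.sqrt ((1 + η) / (1 - η)) * (|u| + |v|)) ^ 2 =
        (1 + η) / (1 - η) * (|u| + |v|) ^ 2 / 4 := by
      rw [mul_pow, mul_pow, Real.sq_sqrt (div_nonneg (by linarith) (by linarith))]
      ring
    rw [hB2]
    -- h8
    have t1 : 0 ≤ q - V.re := by linarith [hqV]
    have t2 : 2 * (α * β) ≤ q + V.re := by rw [hVre]; linarith [hlow]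
    have t3 := mul_le_mul_of_nonneg_left t2 t1
    have t4 : (q - V.re) * (q + V.re) = N ^ 2 := by linear_combination hqN
    have h8 : 2 * (α * β) * (q - V.re) ≤ N ^ 2 := by linarith [t3, t4]
    -- h9
    have r1 : (1 - η) * α ≤ (1 + η) * β := st15_r hη hη1 hlam hα2 hβ1
    have r2 : (1 - η) * β ≤ (1 + η) * α := st15_r hη hη1 hlam hβ2 hα1
    have hNabs : |N| ≤ α * |v| + β * |u| := by
      rw [hNdef]
      calc |α * v + β * u| ≤ |α * v| + |β * u| := abs_add_le _ _
        _ = α * |v| + β * |u| := by rw [abs_mul, abs_mul, abs_of_pos hα0, abs_of_pos hβ0]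
    have hNsq : N ^ 2 ≤ (α * |v| + β * |u|) ^ 2 :=
      sq_le_sq' (by linarith [(abs_le.mp hNabs).1]) (abs_le.mp hNabs).2
    have hcore := st15_core9 (abs_nonneg u) (abs_nonneg v) hα0 hβ0 hη r1 r2
    have h9 : (1 - η) * N ^ 2 ≤ (1 + η) * (α * β) * (|u| + |v|) ^ 2 := by
      have e := mul_le_mul_of_nonneg_left hNsq (by linarith : (0:ℝ) ≤ 1 - η)
      linarith [e, hcore]
    have hX : ((1 + η) / (1 - η) * (|u| + |v|) ^ 2 / 4) * (4 * (1 - η)) =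
        (1 + η) * (|u| + |v|) ^ 2 := by
      have hne : (1:ℝ) - η ≠ 0 := by linarith
      field_simp
    exact st15_fin hη1 (mul_pos hα0 hβ0) t1 h8 h9 hX
end

section
/- Let m ≥ 0, α, β ∈ ℝ, λ := α + iβ, and let a, b ∈ ℂ satisfy Im a = Im b =: 𝒱, α − m − Re a > 0 and α + m − Re b > 0. Set V_λ := (λ−m−a)(λ+m−b). Then V_λ ∉ (−∞,0], and Re(i V_λ^{1/2}) = (𝒱−β)(2α − Re a − Re b) / (√2 · (|V_λ| + Re V_λ)^{1/2}). Consequently: if 𝒱 ≥ β then Re(i V_λ^{1/2}) ≥ 𝒱 − β, and if 𝒱 ≤ β then Re(i V_λ^{1/2}) ≤ 𝒱 − β. If moreover c|α| ≤ α − m − Re a ≤ C|α| and c|α| ≤ α + m − Re b ≤ C|α| for some constants 0 < c ≤ C, then |Re(i V_λ^{1/2})| ≤ (C/c)|𝒱 − β|. -/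
set_option maxHeartbeats 1200000 in
/-- Let `m ≥ 0`, `α, β ∈ ℝ`, `λ := α+iβ`, and `a, b ∈ ℂ` with
`Im a = Im b =: 𝒱`, `α−m−Re a > 0`, `α+m−Re b > 0`, and `V_λ := (λ−m−a)(λ+m−b)`.
Then `V_λ ∉ (−∞,0]`, `Re(i V_λ^{1/2}) = (𝒱−β)(2α−Re a−Re b)/(√2·(|V_λ|+Re V_λ)^{1/2})`;
if `𝒱 ≥ β` then `Re(i V_λ^{1/2}) ≥ 𝒱−β`, if `𝒱 ≤ β` then `Re(i V_λ^{1/2}) ≤ 𝒱−β`; and if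
`c|α| ≤ α−m−Re a ≤ C|α|` and `c|α| ≤ α+m−Re b ≤ C|α|` with `0 < c ≤ C`, then
`|Re(i V_λ^{1/2})| ≤ (C/c)|𝒱−β|`. -/
theorem statement18 (m α β : ℝ) (hm : 0 ≤ m) (a b : ℂ) (hab : a.im = b.im)
    (ha : 0 < α - m - a.re) (hb : 0 < α + m - b.re) :
    (¬(((((α : ℂ) + (β : ℂ) * Complex.I) - (m : ℂ) - a) *
          (((α : ℂ) + (β : ℂ) * Complex.I) + (m : ℂ) - b)).im = 0 ∧
        ((((α : ℂ) + (β : ℂ) * Complex.I) - (m : ℂ) - a) *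
          (((α : ℂ) + (β : ℂ) * Complex.I) + (m : ℂ) - b)).re ≤ 0)) ∧
    (Complex.I * psqrt ((((α : ℂ) + (β : ℂ) * Complex.I) - (m : ℂ) - a) *
        (((α : ℂ) + (β : ℂ) * Complex.I) + (m : ℂ) - b))).re =
      (a.im - β) * (2 * α - a.re - b.re) /
        (Real.sqrt 2 * Real.sqrt
          (‖(((α : ℂ) + (β : ℂ) * Complex.I) - (m : ℂ) - a) *
              (((α : ℂ) + (β : ℂ) * Complex.I) + (m : ℂ) - b)‖ +
            ((((α : ℂ) + (β : ℂ) * Complex.I) - (m : ℂ) - a) *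
              (((α : ℂ) + (β : ℂ) * Complex.I) + (m : ℂ) - b)).re)) ∧
    (β ≤ a.im →
      a.im - β ≤ (Complex.I * psqrt ((((α : ℂ) + (β : ℂ) * Complex.I) - (m : ℂ) - a) *
        (((α : ℂ) + (β : ℂ) * Complex.I) + (m : ℂ) - b))).re) ∧
    (a.im ≤ β →
      (Complex.I * psqrt ((((α : ℂ) + (β : ℂ) * Complex.I) - (m : ℂ) - a) *
        (((α : ℂ) + (β : ℂ) * Complex.I) + (m : ℂ) - b))).re ≤ a.im - β) ∧
    (∀ c C : ℝ, 0 < c → c ≤ C →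
      c * |α| ≤ α - m - a.re → α - m - a.re ≤ C * |α| →
      c * |α| ≤ α + m - b.re → α + m - b.re ≤ C * |α| →
      |(Complex.I * psqrt ((((α : ℂ) + (β : ℂ) * Complex.I) - (m : ℂ) - a) *
          (((α : ℂ) + (β : ℂ) * Complex.I) + (m : ℂ) - b))).re| ≤ (C / c) * |a.im - β|) := by
  set V : ℂ := (((α : ℂ) + (β : ℂ) * Complex.I) - (m : ℂ) - a) *
          (((α : ℂ) + (β : ℂ) * Complex.I) + (m : ℂ) - b) with hV
  set p := α - m - a.re with hp
  set q := α + m - b.re with hq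
  set t := β - a.im with ht
  have hre : V.re = p*q - t*t := by
    simp [hV, Complex.mul_re, hp, hq, ht, hab]
  have him : V.im = t*(p+q) := by
    simp [hV, Complex.mul_im, hp, hq, ht, hab]; ring
  have habs2 : (‖V‖)^2 = (p^2+t^2)*(q^2+t^2) := by
    rw [Complex.sq_norm, Complex.normSq_apply, hre, him]; ring
  have habsnn : 0 ≤ ‖V‖ := norm_nonneg V
  have hge : p*q + t*t ≤ ‖V‖ := by
    nlinarith [sq_nonneg (p - q), sq_nonneg (‖V‖ - (p*q + t*t))]
  have hle2 : 2 * ‖V‖ ≤ p^2 + q^2 + 2*t^2 := by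
    nlinarith [sq_nonneg (p^2 - q^2), sq_nonneg (2*‖V‖ - (p^2+q^2+2*t^2))]
  have hS : 0 < ‖V‖ + V.re := by nlinarith
  set D := Real.sqrt 2 * Real.sqrt (‖V‖ + V.re) with hD
  clear_value p q t
  have hDpos : 0 < D := by
    exact mul_pos (Real.sqrt_pos.mpr two_pos) (Real.sqrt_pos.mpr hS)
  have hD2 : D^2 = 2 * (‖V‖ + V.re) := by
    rw [hD, mul_pow, Real.sq_sqrt two_pos.le, Real.sq_sqrt hS.le]
  have hDle : D ≤ p + q := by
    nlinarith [hre]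
  have hval : (Complex.I * psqrt V).re = -(V.im / D) := by
    have h1 : (Complex.I * psqrt V).re = -(psqrt V).im := by simp [Complex.mul_re]
    rw [h1]; simp [psqrt, hD]; norm_cast
  have hval' : (Complex.I * psqrt V).re = (-t) * (p+q) / D := by
    rw [hval, him]; ring
  refine ⟨?_, ?_, ?_, ?_, ?_⟩
  · rintro ⟨h1, h2⟩
    rw [him] at h1
    have hpq : 0 < p + q := by linarith
    have ht0 : t = 0 := by
      rcases mul_eq_zero.mp h1 with h | h
      · exact h
      · linarith
    rw [hre, ht0] at h2
    nlinarith
  · rw [hval']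
    have : a.im - β = -t := by rw [ht]; ring
    rw [this]
    have : 2 * α - a.re - b.re = p + q := by rw [hp, hq]; ring
    rw [this]
  · intro h
    rw [hval']
    have htn : 0 ≤ -t := by rw [ht]; linarith
    rw [le_div_iff₀ hDpos]
    have : (a.im - β) * D = (-t) * D := by rw [ht]; ring
    rw [this]
    exact mul_le_mul_of_nonneg_left hDle htn
  · intro h
    rw [hval']
    have htn : 0 ≤ t := by rw [ht]; linarith
    rw [div_le_iff₀ hDpos]
    have : (a.im - β) * D = (-t) * D := by rw [ht]; ring
    rw [this]
    linarith [mul_le_mul_of_nonneg_left hDle htn]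
  · intro c C hc hcC h1 h2 h3 h4
    have hα : 0 < |α| := by
      rcases (abs_nonneg α).lt_or_eq with h | h
      · exact h
      · exfalso; rw [← h] at h2; rw [hp] at ha; nlinarith
    have hSlb : 2 * (c*|α|)^2 ≤ ‖V‖ + V.re := by
      have hpq2 : (c*|α|)^2 ≤ p*q := by nlinarith [mul_pos hc hα]
      nlinarith
    have hDlb : 2 * (c * |α|) ≤ D := by
      nlinarith [mul_pos hc hα]
    rw [hval']
    have habs : |(-t) * (p+q) / D| = |t| * (p+q) / D := by
      rw [abs_div, abs_mul, abs_neg, abs_of_pos hDpos, abs_of_pos (by linarith : (0:ℝ) < p+q)]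
    rw [habs]
    have : |a.im - β| = |t| := by rw [ht, abs_sub_comm]
    rw [this]
    rw [div_le_iff₀ hDpos]
    have hkey : (p + q) * c ≤ C * D := by
      nlinarith [mul_pos hc hα, abs_nonneg t]
    calc |t| * (p+q) = |t| * (p+q) := rfl
      _ ≤ |t| * ((C/c) * D) := by
          apply mul_le_mul_of_nonneg_left _ (abs_nonneg t)
          rw [div_mul_eq_mul_div, le_div_iff₀ hc]
          linarith [hkey]
      _ = C / c * |t| * D := by ring
end
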